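/- arXiv:1904.11129 — 11 statements merged into one kernel-verified Lean document; each statement's English description precedes it below -/
import Mathlib

section
/- For every γ ∈ Γ there exists a bounded linear operator S γ : H →L[ℂ] H with S γ (z β) = z (γ + β) for all β ∈ Γ; moreover its operator norm equals the supremum over α ∈ Γ of ‖z (γ + α)‖ / ‖z α‖, and in particular ‖S γ‖ ≤ ‖z γ‖. -/
set_option maxHeartbeats 2000000


/-- In a committee space, for every `γ` there exists a monomial shift
`S γ : H →L[ℂ] H` with `S γ (z β) = z (γ + β)`, its operator norm equals
`⨆ α, ‖z (γ + α)‖ / ‖z α‖`, and in particular `‖S γ‖ ≤ ‖z γ‖`. -/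
theorem stmt_0
    {H : Type*} [NormedAddCommGroup H] [InnerProductSpace ℂ H] [CompleteSpace H]
    {Γ : Type*} [AddCancelMonoid Γ]
    (z : Γ → H)
    (hz_ne : ∀ α, z α ≠ 0)
    (hz_orth : ∀ α β, α ≠ β → (inner ℂ (z α) (z β) : ℂ) = 0)
    (hz_dense : (Submodule.span ℂ (Set.range z)).topologicalClosure = ⊤)
    (hz0 : ‖z 0‖ = 1)
    (hcomm : ∀ α β, ‖z (α + β)‖ ≤ ‖z α‖ * ‖z β‖)
    (γ : Γ) :
    ∃ S : H →L[ℂ] H, (∀ β, S (z β) = z (γ + β)) ∧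
      ‖S‖ = ⨆ α, ‖z (γ + α)‖ / ‖z α‖ ∧ ‖S‖ ≤ ‖z γ‖ := by
  classical
  have _inst : Nonempty Γ := ⟨0⟩
  set ι : Γ → Γ := fun α => γ + α with hι_def
  have hι : Function.Injective ι := fun a b h => by
    simpa [hι_def] using add_left_cancel h
  have hzpos : ∀ α, (0:ℝ) < ‖z α‖ := fun α => norm_pos_iff.2 (hz_ne α)
  set w : Γ → ℝ := fun α => ‖z (γ + α)‖ / ‖z α‖ with hw_def
  have hw_nonneg : ∀ α, 0 ≤ w α := fun α => div_nonneg (norm_nonneg _) (norm_nonneg _)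
  have hw_le : ∀ α, w α ≤ ‖z γ‖ := fun α => by
    rw [hw_def]
    exact (div_le_iff₀ (hzpos α)).2 (hcomm γ α)
  have hbdd : BddAbove (Set.range w) := ⟨‖z γ‖, by rintro _ ⟨α, rfl⟩; exact hw_le α⟩
  set M : ℝ := ⨆ α, w α with hM_def
  have hwM : ∀ α, w α ≤ M := fun α => le_ciSup hbdd α
  have hM_le : M ≤ ‖z γ‖ := ciSup_le hw_le
  have hM0 : (0:ℝ) ≤ M := le_trans (hw_nonneg 0) (hwM 0)
  -- normalized orthonormal family
  set e : Γ → H := fun α => ((‖z α‖⁻¹ : ℝ) : ℂ) • z α with he_def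
  have he_norm : ∀ α, ‖e α‖ = 1 := by
    intro α
    rw [he_def]
    rw [norm_smul, Complex.norm_real, Real.norm_eq_abs,
      abs_of_nonneg (inv_nonneg.2 (norm_nonneg _)), inv_mul_cancel₀ (hzpos α).ne']
  have he_on : Orthonormal ℂ e := by
    refine ⟨he_norm, ?_⟩
    intro a b hab
    simp only [he_def, inner_smul_left, inner_smul_right, Complex.conj_ofReal]
    rw [hz_orth a b hab]
    ring
  have hze : ∀ α, z α = ((‖z α‖ : ℝ) : ℂ) • e α := by
    intro α
    rw [he_def, smul_smul, ← Complex.ofReal_mul, mul_inv_cancel₀ (hzpos α).ne',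
      Complex.ofReal_one, one_smul]
  have hspan : Submodule.span ℂ (Set.range e) = Submodule.span ℂ (Set.range z) := by
    apply le_antisymm
    · rw [Submodule.span_le]
      rintro _ ⟨α, rfl⟩
      exact Submodule.smul_mem _ _ (Submodule.subset_span ⟨α, rfl⟩)
    · rw [Submodule.span_le]
      rintro _ ⟨α, rfl⟩
      rw [hze α]
      exact Submodule.smul_mem _ _ (Submodule.subset_span ⟨α, rfl⟩)
  have hsp : ⊤ ≤ (Submodule.span ℂ (Set.range e)).topologicalClosure := by
    rw [hspan, hz_dense]
  set b : HilbertBasis Γ ℂ H := HilbertBasis.mk he_on hsp with hb_def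
  have hb_coe : ∀ α, b α = e α := fun α => by
    rw [hb_def, HilbertBasis.coe_mk]
  -- the weighted shift on ℓ²
  set g : (lp (fun _ : Γ => ℂ) 2) → Γ → ℂ :=
    fun f => Function.extend ι (fun α => ((w α : ℝ) : ℂ) * f α) 0 with hg_def
  have h2 : (0:ℝ) < (2 : ENNReal).toReal := by norm_num
  have h2' : (2 : ENNReal).toReal = 2 := by norm_num
  have hrp : ∀ x : ℝ, x ^ ((2 : ENNReal).toReal) = x ^ (2:ℕ) := by
    intro x
    rw [h2', show (2:ℝ) = ((2:ℕ):ℝ) by norm_num, Real.rpow_natCast]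
  have hg_sq : ∀ (f : lp (fun _ : Γ => ℂ) 2),
      (fun β => ‖g f β‖ ^ (2:ℕ)) =
        Function.extend ι (fun α => ‖((w α : ℝ) : ℂ) * f α‖ ^ (2:ℕ)) 0 := by
    intro f
    funext β
    by_cases hβ : ∃ a, ι a = β
    · obtain ⟨a, rfl⟩ := hβ
      simp only [hg_def]
      rw [hι.extend_apply, hι.extend_apply]
    · simp only [hg_def]
      rw [Function.extend_apply' _ _ _ hβ, Function.extend_apply' _ _ _ hβ]
      simp
  have hf_sum : ∀ (f : lp (fun _ : Γ => ℂ) 2), Summable fun α => ‖f α‖ ^ (2:ℕ) := by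
    intro f
    have := (lp.memℓp f).summable h2
    exact this.congr fun α => hrp _
  have hbound : ∀ (f : lp (fun _ : Γ => ℂ) 2) (α : Γ),
      ‖((w α : ℝ) : ℂ) * f α‖ ^ (2:ℕ) ≤ M ^ (2:ℕ) * ‖f α‖ ^ (2:ℕ) := by
    intro f α
    have h1 : ‖((w α : ℝ) : ℂ) * f α‖ = w α * ‖f α‖ := by
      rw [norm_mul, Complex.norm_real, Real.norm_eq_abs, abs_of_nonneg (hw_nonneg α)]
    rw [h1, mul_pow]
    gcongr
    exact hwM α
  have hgf_sum : ∀ (f : lp (fun _ : Γ => ℂ) 2),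
      Summable fun α => ‖((w α : ℝ) : ℂ) * f α‖ ^ (2:ℕ) := by
    intro f
    exact Summable.of_nonneg_of_le (fun α => by positivity) (hbound f)
      ((hf_sum f).mul_left (M ^ (2:ℕ)))
  have hg_mem : ∀ (f : lp (fun _ : Γ => ℂ) 2), Memℓp (g f) 2 := by
    intro f
    apply memℓp_gen
    have : Summable fun β => ‖g f β‖ ^ (2:ℕ) := by
      rw [hg_sq f]
      exact (summable_extend_zero hι).2 (hgf_sum f)
    exact this.congr fun β => (hrp _).symm
  have hmk : ∀ (f : Γ → ℂ) (h : Memℓp f 2),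
      ⇑(⟨f, h⟩ : lp (fun _ : Γ => ℂ) 2) = f := fun f h => rfl
  set T₀ : lp (fun _ : Γ => ℂ) 2 →ₗ[ℂ] lp (fun _ : Γ => ℂ) 2 :=
    { toFun := fun f => ⟨g f, hg_mem f⟩
      map_add' := by
        intro f₁ f₂
        apply lp.ext
        rw [lp.coeFn_add, hmk, hmk, hmk]
        funext β
        by_cases hβ : ∃ a, ι a = β
        · obtain ⟨a, rfl⟩ := hβ
          simp only [hg_def, Pi.add_apply, hι.extend_apply]
          rw [lp.coeFn_add, Pi.add_apply]
          ring
        · simp only [hg_def, Pi.add_apply]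
          rw [Function.extend_apply' _ _ _ hβ, Function.extend_apply' _ _ _ hβ,
            Function.extend_apply' _ _ _ hβ]
          simp
      map_smul' := by
        intro c f
        apply lp.ext
        rw [RingHom.id_apply, lp.coeFn_smul, hmk, hmk]
        funext β
        by_cases hβ : ∃ a, ι a = β
        · obtain ⟨a, rfl⟩ := hβ
          simp only [hg_def, Pi.smul_apply, hι.extend_apply]
          rw [lp.coeFn_smul, Pi.smul_apply]
          simp only [smul_eq_mul]
          ring
        · simp only [hg_def, Pi.smul_apply]
          rw [Function.extend_apply' _ _ _ hβ, Function.extend_apply' _ _ _ hβ]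
          simp } with hT₀_def
  have hT₀_coe : ∀ (f : lp (fun _ : Γ => ℂ) 2), ⇑(T₀ f) = g f := fun f => rfl
  -- norm bound for T₀
  have hT₀_bound : ∀ (f : lp (fun _ : Γ => ℂ) 2), ‖T₀ f‖ ≤ M * ‖f‖ := by
    intro f
    have hfN : ‖f‖ ^ (2:ℕ) = ∑' α, ‖f α‖ ^ (2:ℕ) := by
      have := lp.norm_rpow_eq_tsum h2 f
      rw [hrp] at this
      rw [this]
      exact tsum_congr fun α => hrp _
    have hTN : ‖T₀ f‖ ^ (2:ℕ) = ∑' α, ‖((w α : ℝ) : ℂ) * f α‖ ^ (2:ℕ) := by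
      have := lp.norm_rpow_eq_tsum h2 (T₀ f)
      rw [hrp] at this
      have h3 : ‖T₀ f‖ ^ (2:ℕ) = ∑' β, ‖(T₀ f) β‖ ^ (2:ℕ) := by
        rw [this]
        exact tsum_congr fun β => hrp _
      rw [h3]
      have h4 : (fun β => ‖(T₀ f) β‖ ^ (2:ℕ)) =
          Function.extend ι (fun α => ‖((w α : ℝ) : ℂ) * f α‖ ^ (2:ℕ)) 0 := by
        rw [show (fun β => ‖(T₀ f) β‖ ^ (2:ℕ)) = fun β => ‖g f β‖ ^ (2:ℕ) by rw [hT₀_coe]]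
        exact hg_sq f
      rw [h4, tsum_extend_zero hι]
    have key : ‖T₀ f‖ ^ (2:ℕ) ≤ (M * ‖f‖) ^ (2:ℕ) := by
      rw [hTN, mul_pow, hfN, ← tsum_mul_left]
      exact Summable.tsum_le_tsum (hbound f) (hgf_sum f) ((hf_sum f).mul_left _)
    calc ‖T₀ f‖ = Real.sqrt (‖T₀ f‖ ^ (2:ℕ)) := by rw [Real.sqrt_sq (norm_nonneg _)]
      _ ≤ Real.sqrt ((M * ‖f‖) ^ (2:ℕ)) := Real.sqrt_le_sqrt key
      _ = M * ‖f‖ := Real.sqrt_sq (by positivity)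
  -- the shift operator on H
  set S₀ : H →ₗ[ℂ] H :=
    (b.repr.symm.toLinearEquiv.toLinearMap.comp T₀).comp b.repr.toLinearEquiv.toLinearMap
    with hS₀_def
  have hS₀_apply : ∀ x, S₀ x = b.repr.symm (T₀ (b.repr x)) := fun x => rfl
  have hS₀_bound : ∀ x, ‖S₀ x‖ ≤ M * ‖x‖ := by
    intro x
    rw [hS₀_apply, LinearIsometryEquiv.norm_map]
    calc ‖T₀ (b.repr x)‖ ≤ M * ‖b.repr x‖ := hT₀_bound _
      _ = M * ‖x‖ := by rw [LinearIsometryEquiv.norm_map]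
  set S : H →L[ℂ] H := S₀.mkContinuous M hS₀_bound with hS_def
  have hS_apply : ∀ x, S x = b.repr.symm (T₀ (b.repr x)) := fun x => rfl
  -- action on basis vectors
  have hsymm : ∀ i, b.repr.symm (lp.single 2 i 1) = b i := fun i => by
    rw [← HilbertBasis.repr_self b i, LinearIsometryEquiv.symm_apply_apply]
  have hT₀_single : ∀ α, T₀ (lp.single 2 α (1:ℂ)) =
      ((w α : ℝ) : ℂ) • lp.single 2 (ι α) (1:ℂ) := by
    intro α
    apply lp.ext
    rw [hT₀_coe, lp.coeFn_smul]
    funext β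
    by_cases hβ : ∃ a, ι a = β
    · obtain ⟨a, rfl⟩ := hβ
      simp only [hg_def, hι.extend_apply, Pi.smul_apply, smul_eq_mul]
      by_cases ha : a = α
      · subst ha
        rw [lp.single_apply_self, lp.single_apply_self]
      · rw [lp.single_apply_ne _ _ _ ha, lp.single_apply_ne _ _ _ (fun h => ha (hι h)),
          mul_zero, mul_zero]
    · simp only [hg_def]
      rw [Function.extend_apply' _ _ _ hβ, Pi.smul_apply,
        lp.single_apply_ne _ _ _ (fun h => hβ ⟨α, h.symm⟩)]
      simp
  have hSe : ∀ α, S (e α) = ((w α : ℝ) : ℂ) • e (ι α) := by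
    intro α
    rw [hS_apply, ← hb_coe, HilbertBasis.repr_self, hT₀_single,
      LinearIsometryEquiv.map_smul, hsymm, hb_coe]
  -- S shifts the z's
  have hSz : ∀ β, S (z β) = z (γ + β) := by
    intro β
    rw [hze β, map_smul, hSe, smul_smul, ← Complex.ofReal_mul]
    have h5 : ‖z β‖ * w β = ‖z (γ + β)‖ := by
      rw [hw_def]
      exact mul_div_cancel₀ _ (hzpos β).ne' ▸ by
        field_simp
    rw [show (ι β) = γ + β from rfl, h5, ← hze]
  -- norm computation
  have hS_le : ‖S‖ ≤ M := S₀.mkContinuous_norm_le hM0 hS₀_bound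
  have hS_ge : M ≤ ‖S‖ := by
    apply ciSup_le
    intro α
    have h6 : ‖S (e α)‖ = w α := by
      rw [hSe, norm_smul, Complex.norm_real, Real.norm_eq_abs,
        abs_of_nonneg (hw_nonneg α), he_norm, mul_one]
    calc w α = ‖S (e α)‖ := h6.symm
      _ ≤ ‖S‖ * ‖e α‖ := S.le_opNorm _
      _ = ‖S‖ := by rw [he_norm, mul_one]
  have hS_norm : ‖S‖ = M := le_antisymm hS_le hS_ge
  refine ⟨S, hSz, ?_, ?_⟩
  · rw [hS_norm, hM_def]
  · rw [hS_norm]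
    exact hM_le
end

section
/- Let γ, α ∈ Γ and let S γ be a monomial shift. If there exists β ∈ Γ with α = γ + β (such β is unique by cancellativity), then ‖(S γ)† (z α)‖ = ‖z α‖² / ‖z β‖. If no such β exists, then (S γ)† (z α) = 0. -/
/-- For a monomial shift `S` for `γ`, if `α = γ + β` for some (necessarily
unique) `β`, then `‖S† (z α)‖ = ‖z α‖² / ‖z β‖`; if no such `β` exists, then `S† (z α) = 0`. -/
theorem stmt_1
    {H : Type*} [NormedAddCommGroup H] [InnerProductSpace ℂ H] [CompleteSpace H]
    {Γ : Type*} [AddCancelMonoid Γ]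
    (z : Γ → H)
    (hz_ne : ∀ α, z α ≠ 0)
    (hz_orth : ∀ α β, α ≠ β → (inner ℂ (z α) (z β) : ℂ) = 0)
    (hz_dense : (Submodule.span ℂ (Set.range z)).topologicalClosure = ⊤)
    (hz0 : ‖z 0‖ = 1)
    (hcomm : ∀ α β, ‖z (α + β)‖ ≤ ‖z α‖ * ‖z β‖)
    (γ α : Γ) (S : H →L[ℂ] H) (hS : ∀ β, S (z β) = z (γ + β)) :
    (∀ β, α = γ + β →
        ‖(ContinuousLinearMap.adjoint S) (z α)‖ = ‖z α‖ ^ 2 / ‖z β‖) ∧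
      (¬ (∃ β, α = γ + β) → (ContinuousLinearMap.adjoint S) (z α) = 0) := by
  have key : ∀ v : H, (∀ b, (inner ℂ (z b) v : ℂ) = 0) → v = 0 := by
    intro v hv
    have hmem : v ∈ (Submodule.span ℂ (Set.range z))ᗮ := by
      rw [Submodule.mem_orthogonal]
      intro u hu
      induction hu using Submodule.span_induction with
      | mem x hx => obtain ⟨b, rfl⟩ := hx; exact hv b
      | zero => simp
      | add x y _ _ hx hy => rw [inner_add_left, hx, hy, add_zero]
      | smul c x _ hx => rw [inner_smul_left, hx, mul_zero]
    have := Submodule.topologicalClosure_eq_top_iff.mp hz_dense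
    rw [this] at hmem
    simpa using hmem
  have hw : ∀ b, (inner ℂ (z b) ((ContinuousLinearMap.adjoint S) (z α)) : ℂ)
      = inner ℂ (z (γ + b)) (z α) := by
    intro b
    rw [ContinuousLinearMap.adjoint_inner_right, hS]
  constructor
  · intro β hβ
    have hnzβ : ‖z β‖ ≠ 0 := norm_ne_zero_iff.mpr (hz_ne β)
    set c : ℂ := ((‖z α‖ ^ 2 / ‖z β‖ ^ 2 : ℝ) : ℂ) with hc
    have heq : (ContinuousLinearMap.adjoint S) (z α) = c • z β := by
      have := key ((ContinuousLinearMap.adjoint S) (z α) - c • z β) ?_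
      · linear_combination (norm := module) this
      intro b
      rw [inner_sub_right, inner_smul_right, hw]
      by_cases hb : b = β
      · subst hb
        rw [← hβ, inner_self_eq_norm_sq_to_K, inner_self_eq_norm_sq_to_K, hc]
        push_cast
        have h2 : ((‖z b‖ : ℂ)) ^ 2 ≠ 0 := pow_ne_zero 2 (Complex.ofReal_ne_zero.mpr hnzβ)
        rw [sub_eq_zero]
        exact (div_mul_cancel₀ _ h2).symm
      · rw [hz_orth (γ + b) α (by rw [hβ]; exact fun h => hb (add_left_cancel h)),
          hz_orth b β hb, mul_zero, sub_zero]
    rw [heq, norm_smul, hc]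
    rw [Complex.norm_real, Real.norm_eq_abs, abs_of_nonneg (by positivity)]
    field_simp
  · intro hne
    apply key
    intro b
    rw [hw]
    exact hz_orth (γ + b) α fun h => hne ⟨b, h.symm⟩
end

section
/- The operator norm of the row operator R satisfies ‖R‖ ≤ ⨆_{α ∈ Γ} ∑'_{γ ∈ {γ : ∃ β, α = γ + β}} w γ * ‖z γ‖². -/
open scoped NNReal ComplexConjugate

section Aux

variable {H : Type*} [NormedAddCommGroup H] [InnerProductSpace ℂ H]

private lemma aux_opnorm_le {R : H →L[ℂ] H} {C : ℝ} (hC : 0 ≤ C)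
    (hsym : (R : H →ₗ[ℂ] H).IsSymmetric)
    (hpos : ∀ x : H, 0 ≤ (inner ℂ (R x) x : ℂ).re)
    (hbound : ∀ x : H, (inner ℂ (R x) x : ℂ).re ≤ C * ‖x‖ ^ 2) : ‖R‖ ≤ C := by
  refine R.opNorm_le_bound hC fun v => ?_
  set core : PreInnerProductSpace.Core ℂ H :=
    { inner := fun x y => (inner ℂ x (R y) : ℂ)
      conj_inner_symm := fun x y => by
        change conj (inner ℂ y (R x) : ℂ) = (inner ℂ x (R y) : ℂ)
        rw [inner_conj_symm]; exact hsym x y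
      re_inner_nonneg := fun x => by
        change (0:ℝ) ≤ RCLike.re (inner ℂ x (R x) : ℂ)
        rw [← inner_conj_symm x (R x)]
        rw [RCLike.conj_re, RCLike.re_to_complex]; exact hpos x
      add_left := fun x y z => inner_add_left _ _ _
      smul_left := fun x y r => inner_smul_left _ _ _ } with hcore
  have cs : ‖(inner ℂ (R v) (R v) : ℂ)‖ * ‖(inner ℂ v (R (R v)) : ℂ)‖
      ≤ RCLike.re (inner ℂ (R v) (R (R v)) : ℂ) * RCLike.re (inner ℂ v (R v) : ℂ) :=
    @InnerProductSpace.Core.inner_mul_inner_self_le ℂ H _ _ _ core (R v) v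
  have e1 : (inner ℂ (R v) (R v) : ℂ) = ((‖R v‖ : ℂ)) ^ 2 := inner_self_eq_norm_sq_to_K _
  have e2 : (inner ℂ v (R (R v)) : ℂ) = (inner ℂ (R v) (R v) : ℂ) := (hsym v (R v)).symm
  have hX : RCLike.re (inner ℂ (R v) (R (R v)) : ℂ) ≤ C * ‖R v‖ ^ 2 := by
    rw [← inner_conj_symm (R v) (R (R v)), RCLike.conj_re, RCLike.re_to_complex]
    exact hbound (R v)
  have hX0 : 0 ≤ RCLike.re (inner ℂ (R v) (R (R v)) : ℂ) := by
    rw [← inner_conj_symm (R v) (R (R v)), RCLike.conj_re, RCLike.re_to_complex]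
    exact hpos (R v)
  have hY : RCLike.re (inner ℂ v (R v) : ℂ) ≤ C * ‖v‖ ^ 2 := by
    rw [← inner_conj_symm v (R v), RCLike.conj_re, RCLike.re_to_complex]
    exact hbound v
  have hY0 : 0 ≤ RCLike.re (inner ℂ v (R v) : ℂ) := by
    rw [← inner_conj_symm v (R v), RCLike.conj_re, RCLike.re_to_complex]
    exact hpos v
  rw [e2, e1] at cs
  have hnorm : ‖((‖R v‖ : ℂ)) ^ 2‖ = ‖R v‖ ^ 2 := by
    rw [norm_pow, Complex.norm_real, Real.norm_of_nonneg (norm_nonneg _)]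
  rw [hnorm] at cs
  have h4 : ‖R v‖ ^ 2 * ‖R v‖ ^ 2 ≤ (C * ‖R v‖ ^ 2) * (C * ‖v‖ ^ 2) :=
    le_trans cs (mul_le_mul hX hY hY0 (by positivity))
  rcases eq_or_lt_of_le (norm_nonneg (R v)) with ha | ha
  · rw [← ha]; positivity
  · have h5 : ‖R v‖ ^ 2 * ‖R v‖ ^ 2 ≤ ‖R v‖ ^ 2 * (C * ‖v‖) ^ 2 := by nlinarith [h4]
    have h6 : ‖R v‖ ^ 2 ≤ (C * ‖v‖) ^ 2 :=
      le_of_mul_le_mul_left (by linarith [h5]) (pow_pos ha 2)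
    nlinarith [norm_nonneg v, mul_nonneg hC (norm_nonneg v), h6, ha]

private lemma aux_parseval [CompleteSpace H] {ι : Type*} (b : HilbertBasis ι ℂ H) (x : H) :
    HasSum (fun i => ‖(inner ℂ (b i) x : ℂ)‖ ^ 2) (‖x‖ ^ 2) := by
  have h2 := Complex.hasSum_re (b.hasSum_inner_mul_inner x x)
  have hcm : ∀ zc : ℂ, (conj zc * zc).re = ‖zc‖ ^ 2 := by
    intro zc
    rw [Complex.sq_norm, Complex.normSq_apply, Complex.mul_re,
      Complex.conj_re, Complex.conj_im]
    ring
  have e : (fun i => ((inner ℂ x (b i) : ℂ) * (inner ℂ (b i) x : ℂ)).re)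
      = fun i => ‖(inner ℂ (b i) x : ℂ)‖ ^ 2 := by
    funext i
    rw [← inner_conj_symm x (b i), hcm]
  rw [e] at h2
  have e2 : (inner ℂ x x : ℂ).re = ‖x‖ ^ 2 := by
    rw [← RCLike.re_to_complex]
    exact inner_self_eq_norm_sq (𝕜 := ℂ) x
  rwa [e2] at h2

end Aux

set_option maxHeartbeats 1000000 in
/-- The row operator `R` (with quadratic form
`⟪R h, h⟫ = ∑' γ, w γ * ‖(S γ)† h‖²`) satisfies
`‖R‖ ≤ ⨆ α, ∑'_{γ : ∃ β, α = γ + β} w γ * ‖z γ‖²`. -/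
theorem stmt_3
    {H : Type*} [NormedAddCommGroup H] [InnerProductSpace ℂ H] [CompleteSpace H]
    {Γ : Type*} [AddCancelMonoid Γ]
    (z : Γ → H)
    (hz_ne : ∀ α, z α ≠ 0)
    (hz_orth : ∀ α β, α ≠ β → (inner ℂ (z α) (z β) : ℂ) = 0)
    (hz_dense : (Submodule.span ℂ (Set.range z)).topologicalClosure = ⊤)
    (hz0 : ‖z 0‖ = 1)
    (hcomm : ∀ α β, ‖z (α + β)‖ ≤ ‖z α‖ * ‖z β‖)
    (w : Γ → ℝ≥0)
    (hw : Summable fun γ => (w γ : ℝ) * ‖z γ‖ ^ 2)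
    (S : Γ → H →L[ℂ] H) (hS : ∀ γ β, S γ (z β) = z (γ + β))
    (R : H →L[ℂ] H)
    (hR : ∀ h : H, (inner ℂ (R h) h : ℂ)
        = ((∑' γ, (w γ : ℝ) * ‖(ContinuousLinearMap.adjoint (S γ)) h‖ ^ 2 : ℝ) : ℂ)) :
    ‖R‖ ≤ ⨆ α : Γ, ∑' γ : {γ : Γ // ∃ β, α = γ + β}, (w γ.1 : ℝ) * ‖z γ.1‖ ^ 2 := by
  classical
  set c : Γ → ℝ := fun α => ∑' γ : {γ : Γ // ∃ β, α = γ + β}, (w γ.1 : ℝ) * ‖z γ.1‖ ^ 2 with hc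
  set C : ℝ := ⨆ α : Γ, c α with hCdef
  have hwnn : ∀ γ : Γ, 0 ≤ (w γ : ℝ) * ‖z γ‖ ^ 2 := fun γ => mul_nonneg (w γ).2 (sq_nonneg _)
  have hcle : ∀ α, c α ≤ ∑' γ, (w γ : ℝ) * ‖z γ‖ ^ 2 := fun α =>
    Summable.tsum_subtype_le (fun γ : Γ => (w γ : ℝ) * ‖z γ‖ ^ 2) {γ | ∃ β, α = γ + β} hwnn hw
  have hbdd : BddAbove (Set.range c) := ⟨_, by rintro _ ⟨α, rfl⟩; exact hcle α⟩
  have hcnn : ∀ α, 0 ≤ c α := fun α => tsum_nonneg fun γ => hwnn γ.1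
  have hcC : ∀ α, c α ≤ C := fun α => le_ciSup hbdd α
  have hC0 : 0 ≤ C := le_trans (hcnn 0) (hcC 0)
  -- the orthonormal basis
  have hnz : ∀ α, ‖z α‖ ≠ 0 := fun α => norm_ne_zero_iff.2 (hz_ne α)
  have hnzc : ∀ α, ((‖z α‖ : ℂ)) ≠ 0 := fun α => by exact_mod_cast hnz α
  set v : Γ → H := fun α => ((‖z α‖ : ℂ))⁻¹ • z α with hv
  have hzv : ∀ α, z α = ((‖z α‖ : ℂ)) • v α := fun α => by
    rw [hv]; simp only []; rw [smul_inv_smul₀ (hnzc α)]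
  have hon : Orthonormal ℂ v := by
    rw [orthonormal_iff_ite]
    intro i j
    by_cases hij : i = j
    · subst hij
      simp only [hv, inner_smul_left, inner_smul_right, if_true,
        inner_self_eq_norm_sq_to_K (𝕜 := ℂ) (z i), map_inv₀, Complex.conj_ofReal]
      field_simp
      exact div_self (by simpa using hnzc i)
    · simp only [hv, inner_smul_left, inner_smul_right, hz_orth i j hij, mul_zero, if_neg hij]
  set b : HilbertBasis Γ ℂ H := HilbertBasis.mk hon (by
    have hspan : Submodule.span ℂ (Set.range v) = Submodule.span ℂ (Set.range z) := by
      apply le_antisymm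
      · refine Submodule.span_le.2 ?_
        rintro _ ⟨α, rfl⟩
        exact Submodule.smul_mem _ _ (Submodule.subset_span ⟨α, rfl⟩)
      · refine Submodule.span_le.2 ?_
        rintro _ ⟨α, rfl⟩
        rw [hzv α]
        exact Submodule.smul_mem _ _ (Submodule.subset_span ⟨α, rfl⟩)
    rw [hspan, hz_dense]) with hb
  have hbv : ⇑b = v := HilbertBasis.coe_mk _ _
  -- the key quadratic-form bound
  have key : ∀ h : H,
      (∑' γ, (w γ : ℝ) * ‖(ContinuousLinearMap.adjoint (S γ)) h‖ ^ 2) ≤ C * ‖h‖ ^ 2 := by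
    intro h
    set A : Γ → H := fun γ => (ContinuousLinearMap.adjoint (S γ)) h with hA
    set Tt : Γ → ℝ := fun δ => ‖(inner ℂ (v δ) h : ℂ)‖ ^ 2 with hTt
    have hTtnn : ∀ δ, 0 ≤ Tt δ := fun δ => sq_nonneg _
    have hTsum : HasSum Tt (‖h‖ ^ 2) := by
      have := aux_parseval b h
      rwa [hbv] at this
    have hTsumm : Summable Tt := hTsum.summable
    -- norm computation for inner ℂ products against z
    have hzin : ∀ δ, ‖(inner ℂ (z δ) h : ℂ)‖ = ‖z δ‖ * ‖(inner ℂ (v δ) h : ℂ)‖ := by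
      intro δ
      have e3 : (inner ℂ (z δ) h : ℂ) = conj ((‖z δ‖ : ℂ)) * inner ℂ (v δ) h := by
        conv_lhs => rw [hzv δ]
        rw [inner_smul_left]
      rw [e3, norm_mul, RCLike.norm_conj, Complex.norm_real,
        Real.norm_of_nonneg (norm_nonneg _)]
    -- bound for each adjoint norm
    have hAle : ∀ γ, ‖A γ‖ ^ 2 ≤ ‖z γ‖ ^ 2 * ∑' α, Tt (γ + α) := by
      intro γ
      have hpars : HasSum (fun α => ‖(inner ℂ (v α) (A γ) : ℂ)‖ ^ 2) (‖A γ‖ ^ 2) := by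
        have := aux_parseval b (A γ)
        rwa [hbv] at this
      have hsumm2 : Summable fun α => Tt (γ + α) :=
        hTsumm.comp_injective (add_right_injective γ)
      have hsummR : HasSum (fun α => ‖z γ‖ ^ 2 * Tt (γ + α))
          (‖z γ‖ ^ 2 * ∑' α, Tt (γ + α)) := hsumm2.hasSum.mul_left _
      refine hasSum_le (fun α => ?_) hpars hsummR
      have hSv : S γ (v α) = ((‖z α‖ : ℂ))⁻¹ • z (γ + α) := by
        simp only [hv]
        rw [map_smul, hS]
      have h1 : ‖(inner ℂ (v α) (A γ) : ℂ)‖ = ‖z α‖⁻¹ * ‖(inner ℂ (z (γ + α)) h : ℂ)‖ := by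
        simp only [hA]
        rw [ContinuousLinearMap.adjoint_inner_right, hSv, inner_smul_left, norm_mul,
          RCLike.norm_conj, norm_inv, Complex.norm_real,
          Real.norm_of_nonneg (norm_nonneg _)]
      have hr : ‖z α‖⁻¹ * ‖z (γ + α)‖ ≤ ‖z γ‖ := by
        rw [inv_mul_le_iff₀ ((norm_nonneg _).lt_of_ne (Ne.symm (hnz α)))]
        calc ‖z (γ + α)‖ ≤ ‖z γ‖ * ‖z α‖ := hcomm γ α
          _ = ‖z α‖ * ‖z γ‖ := mul_comm _ _
      have hr0 : 0 ≤ ‖z α‖⁻¹ * ‖z (γ + α)‖ := by positivity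
      calc ‖(inner ℂ (v α) (A γ) : ℂ)‖ ^ 2
          = (‖z α‖⁻¹ * ‖z (γ + α)‖) ^ 2 * Tt (γ + α) := by
            rw [h1, hzin (γ + α), hTt]; ring
        _ ≤ ‖z γ‖ ^ 2 * Tt (γ + α) :=
            mul_le_mul_of_nonneg_right (pow_le_pow_left₀ hr0 hr 2) (hTtnn _)
    -- the product-indexed family
    set F : Γ × Γ → ℝ := fun p => ((w p.1 : ℝ) * ‖z p.1‖ ^ 2) * Tt (p.1 + p.2) with hF
    have hFnn : ∀ p, 0 ≤ F p := fun p => mul_nonneg (hwnn p.1) (hTtnn _)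
    have hFslice : ∀ γ, Summable fun α => F (γ, α) := by
      intro γ
      have hs : Summable fun α => Tt (γ + α) := hTsumm.comp_injective (add_right_injective γ)
      simpa only [hF] using hs.mul_left ((w γ : ℝ) * ‖z γ‖ ^ 2)
    have hinnersum : ∀ γ : Γ, (∑' α, Tt (γ + α)) ≤ ‖h‖ ^ 2 := by
      intro γ
      rw [← hTsum.tsum_eq]
      exact Summable.tsum_le_tsum_of_inj (fun α => γ + α) (add_right_injective γ)
        (fun c _ => hTtnn c) (fun α => le_rfl)
        (hTsumm.comp_injective (add_right_injective γ)) hTsumm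
    have hGle : ∀ γ, (∑' α, F (γ, α)) ≤ ((w γ : ℝ) * ‖z γ‖ ^ 2) * ‖h‖ ^ 2 := by
      intro γ
      simp only [hF]
      rw [tsum_mul_left]
      exact mul_le_mul_of_nonneg_left (hinnersum γ) (hwnn γ)
    have hGnn : ∀ γ : Γ, 0 ≤ ∑' α, F (γ, α) := fun γ => tsum_nonneg fun α => hFnn _
    have hGsum : Summable fun γ => ∑' α, F (γ, α) :=
      Summable.of_nonneg_of_le hGnn hGle (hw.mul_right (‖h‖ ^ 2))
    have hFsum : Summable F := (summable_prod_of_nonneg hFnn).2 ⟨hFslice, hGsum⟩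
    -- comparison of the diagonal sum with the product sum
    set g : Γ → ℝ := fun γ => (w γ : ℝ) * ‖A γ‖ ^ 2 with hg
    have hgnn : ∀ γ, 0 ≤ g γ := fun γ => mul_nonneg (w γ).2 (sq_nonneg _)
    have hgle : ∀ γ, g γ ≤ ∑' α, F (γ, α) := by
      intro γ
      simp only [hg, hF]
      rw [tsum_mul_left, mul_assoc]
      exact mul_le_mul_of_nonneg_left (hAle γ) (w γ).2
    have hgsum : Summable g := Summable.of_nonneg_of_le hgnn hgle hGsum
    have step1 : (∑' γ, g γ) ≤ ∑' γ, ∑' α, F (γ, α) := Summable.tsum_le_tsum hgle hgsum hGsum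
    have step2 : (∑' γ, ∑' α, F (γ, α)) = ∑' p : Γ × Γ, F p := (Summable.tsum_prod hFsum).symm
    -- regrouping along fibers
    set Fib := Σ δ : Γ, {γ : Γ // ∃ β, δ = γ + β} with hFib
    set G' : Γ × Γ → Fib := fun p => ⟨p.1 + p.2, ⟨p.1, ⟨p.2, rfl⟩⟩⟩ with hG'
    have hGbij : Function.Bijective G' := by
      constructor
      · rintro ⟨γ, α⟩ ⟨γ', α'⟩ hpq
        have h2 : γ = γ' := congrArg (fun s : Fib => (s.2 : Γ)) hpq
        have h1 : γ + α = γ' + α' := congrArg (fun s : Fib => s.1) hpq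
        subst h2
        obtain rfl := add_left_cancel h1
        rfl
      · rintro ⟨δ, ⟨γ, ⟨β, rfl⟩⟩⟩
        exact ⟨(γ, β), rfl⟩
    set e : Γ × Γ ≃ Fib := Equiv.ofBijective G' hGbij with he
    have step3 : (∑' p : Γ × Γ, F p) = ∑' s : Fib, F (e.symm s) :=
      (Equiv.tsum_eq e.symm F).symm
    have key2 : ∀ s : Fib, F (e.symm s) = ((w (s.2 : Γ) : ℝ) * ‖z (s.2 : Γ)‖ ^ 2) * Tt s.1 := by
      rintro ⟨δ, ⟨γ, ⟨β, rfl⟩⟩⟩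
      have hsy : e.symm ⟨γ + β, ⟨γ, ⟨β, rfl⟩⟩⟩ = (γ, β) := by
        apply e.injective
        rw [Equiv.apply_symm_apply]
        rfl
      rw [hsy]
    have hFs : Summable fun s : Fib => F (e.symm s) := by
      have := (Equiv.summable_iff e.symm (f := F)).2 hFsum
      exact this
    have hFsig : Summable fun s : Fib => ((w (s.2 : Γ) : ℝ) * ‖z (s.2 : Γ)‖ ^ 2) * Tt s.1 := by
      rwa [funext key2] at hFs
    have step4 : (∑' s : Fib, F (e.symm s)) = ∑' s : Fib,
        ((w (s.2 : Γ) : ℝ) * ‖z (s.2 : Γ)‖ ^ 2) * Tt s.1 := by rw [funext key2]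
    have step5 : (∑' s : Fib, ((w (s.2 : Γ) : ℝ) * ‖z (s.2 : Γ)‖ ^ 2) * Tt s.1)
        = ∑' δ, c δ * Tt δ := by
      rw [Summable.tsum_sigma hFsig]
      congr 1
      funext δ
      simp only [hc]
      rw [← tsum_mul_right]
    have step6 : (∑' δ, c δ * Tt δ) ≤ ∑' δ, C * Tt δ := by
      refine Summable.tsum_le_tsum (fun δ => mul_le_mul_of_nonneg_right (hcC δ) (hTtnn δ)) ?_ ?_
      · refine Summable.of_nonneg_of_le (fun δ => mul_nonneg (hcnn δ) (hTtnn δ))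
          (fun δ => mul_le_mul_of_nonneg_right (hcC δ) (hTtnn δ)) (hTsumm.mul_left C)
      · exact hTsumm.mul_left C
    have step7 : (∑' δ, C * Tt δ) = C * ‖h‖ ^ 2 := (hTsum.mul_left C).tsum_eq
    calc (∑' γ, (w γ : ℝ) * ‖A γ‖ ^ 2) ≤ ∑' γ, ∑' α, F (γ, α) := step1
      _ = ∑' p : Γ × Γ, F p := step2
      _ = ∑' s : Fib, F (e.symm s) := step3
      _ = ∑' s : Fib, ((w (s.2 : Γ) : ℝ) * ‖z (s.2 : Γ)‖ ^ 2) * Tt s.1 := step4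
      _ = ∑' δ, c δ * Tt δ := step5
      _ ≤ ∑' δ, C * Tt δ := step6
      _ = C * ‖h‖ ^ 2 := step7
  -- assemble
  have hsym : (R : H →ₗ[ℂ] H).IsSymmetric := by
    rw [LinearMap.isSymmetric_iff_inner_map_self_real]
    intro x
    rw [ContinuousLinearMap.coe_coe, hR x, Complex.conj_ofReal]
  have hpos : ∀ x : H, 0 ≤ (inner ℂ (R x) x : ℂ).re := by
    intro x
    rw [hR x, Complex.ofReal_re]
    exact tsum_nonneg fun γ => mul_nonneg (w γ).2 (sq_nonneg _)
  have hbound : ∀ x : H, (inner ℂ (R x) x : ℂ).re ≤ C * ‖x‖ ^ 2 := by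
    intro x
    rw [hR x, Complex.ofReal_re]
    exact key x
  exact aux_opnorm_le hC0 hsym hpos hbound
end

section
/- The operator norm of the column operator C satisfies ‖C‖ = ∑'_γ w γ * ‖z γ‖². -/
open scoped NNReal

lemma pyth_aux {H : Type*} [NormedAddCommGroup H] [InnerProductSpace ℂ H]
    {ι : Type*} (v : ι → H)
    (hv : ∀ a b, a ≠ b → (inner ℂ (v a) (v b) : ℂ) = 0)
    (c : ι → ℂ) (s : Finset ι) :
    ‖∑ b ∈ s, c b • v b‖ ^ 2 = ∑ b ∈ s, ‖c b‖ ^ 2 * ‖v b‖ ^ 2 := by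
  classical
  induction s using Finset.induction_on with
  | empty => simp
  | @insert a s ha ih =>
    have horth : (inner ℂ (c a • v a) (∑ b ∈ s, c b • v b) : ℂ) = 0 := by
      rw [inner_sum]
      refine Finset.sum_eq_zero fun b hb => ?_
      rw [inner_smul_left, inner_smul_right, hv a b (by rintro rfl; exact ha hb)]
      ring
    have h3 := norm_add_sq_eq_norm_sq_add_norm_sq_of_inner_eq_zero _ _ horth
    rw [Finset.sum_insert ha, Finset.sum_insert ha, pow_two, h3, ← pow_two, ← pow_two, ih,
      norm_smul, mul_pow]

/-- The column operator `C` (with quadratic form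
`⟪C h, h⟫ = ∑' γ, w γ * ‖S γ h‖²`) satisfies `‖C‖ = ∑' γ, w γ * ‖z γ‖²`. -/
theorem stmt_5
    {H : Type*} [NormedAddCommGroup H] [InnerProductSpace ℂ H] [CompleteSpace H]
    {Γ : Type*} [AddCancelMonoid Γ]
    (z : Γ → H)
    (hz_ne : ∀ α, z α ≠ 0)
    (hz_orth : ∀ α β, α ≠ β → (inner ℂ (z α) (z β) : ℂ) = 0)
    (hz_dense : (Submodule.span ℂ (Set.range z)).topologicalClosure = ⊤)
    (hz0 : ‖z 0‖ = 1)
    (hcomm : ∀ α β, ‖z (α + β)‖ ≤ ‖z α‖ * ‖z β‖)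
    (w : Γ → ℝ≥0)
    (hw : Summable fun γ => (w γ : ℝ) * ‖z γ‖ ^ 2)
    (S : Γ → H →L[ℂ] H) (hS : ∀ γ β, S γ (z β) = z (γ + β))
    (C : H →L[ℂ] H)
    (hC : ∀ h : H, (inner ℂ (C h) h : ℂ)
        = ((∑' γ, (w γ : ℝ) * ‖S γ h‖ ^ 2 : ℝ) : ℂ)) :
    ‖C‖ = ∑' γ, (w γ : ℝ) * ‖z γ‖ ^ 2 := by
  classical
  haveI : Nontrivial H := nontrivial_of_ne (z 0) 0 (hz_ne 0)
  set M : ℝ := ∑' γ, (w γ : ℝ) * ‖z γ‖ ^ 2 with hM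
  have hM0 : 0 ≤ M := tsum_nonneg fun γ => by positivity
  -- Step A: ‖S γ h‖ ≤ ‖z γ‖ * ‖h‖
  have hSle : ∀ γ (h : H), ‖S γ h‖ ≤ ‖z γ‖ * ‖h‖ := by
    intro γ
    have hspan : ∀ x ∈ Submodule.span ℂ (Set.range z), ‖S γ x‖ ≤ ‖z γ‖ * ‖x‖ := by
      intro x hx
      obtain ⟨c, rfl⟩ := Finsupp.mem_span_range_iff_exists_finsupp.mp hx
      rw [Finsupp.sum]
      have h1 : S γ (∑ i ∈ c.support, c i • z i) = ∑ i ∈ c.support, c i • z (γ + i) := by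
        rw [map_sum]
        exact Finset.sum_congr rfl fun i _ => by rw [map_smul, hS]
      have e1 := pyth_aux z hz_orth c c.support
      have e2 := pyth_aux (fun i => z (γ + i))
        (fun a b hab => hz_orth _ _ (fun h => hab (add_left_cancel h))) c c.support
      have hsq : ‖S γ (∑ i ∈ c.support, c i • z i)‖ ^ 2
          ≤ (‖z γ‖ * ‖∑ i ∈ c.support, c i • z i‖) ^ 2 := by
        rw [h1, e2, mul_pow, e1, Finset.mul_sum]
        refine Finset.sum_le_sum fun i _ => ?_
        have := hcomm γ i
        have h2 : ‖z (γ + i)‖ ^ 2 ≤ (‖z γ‖ * ‖z i‖) ^ 2 :=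
          pow_le_pow_left₀ (norm_nonneg _) this 2
        calc ‖c i‖ ^ 2 * ‖z (γ + i)‖ ^ 2 ≤ ‖c i‖ ^ 2 * (‖z γ‖ * ‖z i‖) ^ 2 := by
              exact mul_le_mul_of_nonneg_left h2 (by positivity)
          _ = ‖z γ‖ ^ 2 * (‖c i‖ ^ 2 * ‖z i‖ ^ 2) := by ring
      have := Real.sqrt_le_sqrt hsq
      rwa [Real.sqrt_sq (norm_nonneg _), Real.sqrt_sq (by positivity)] at this
    intro h
    have hclosed : IsClosed {x : H | ‖S γ x‖ ≤ ‖z γ‖ * ‖x‖} :=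
      isClosed_le ((S γ).continuous.norm) (continuous_const.mul continuous_norm)
    have hmem : h ∈ closure ((Submodule.span ℂ (Set.range z) : Submodule ℂ H) : Set H) := by
      have : ((Submodule.span ℂ (Set.range z)).topologicalClosure : Set H) = Set.univ := by
        rw [hz_dense]; rfl
      rw [← Submodule.topologicalClosure_coe, this]; trivial
    exact closure_minimal hspan hclosed hmem
  -- summability of the quadratic form
  have hsum : ∀ h : H, Summable fun γ => (w γ : ℝ) * ‖S γ h‖ ^ 2 := by
    intro h
    refine Summable.of_nonneg_of_le (fun γ => by positivity) (fun γ => ?_) (hw.mul_right (‖h‖ ^ 2))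
    have h2 : ‖S γ h‖ ^ 2 ≤ (‖z γ‖ * ‖h‖) ^ 2 := pow_le_pow_left₀ (norm_nonneg _) (hSle γ h) 2
    calc (w γ : ℝ) * ‖S γ h‖ ^ 2 ≤ (w γ : ℝ) * (‖z γ‖ * ‖h‖) ^ 2 :=
          mul_le_mul_of_nonneg_left h2 (w γ).coe_nonneg
      _ = (w γ : ℝ) * ‖z γ‖ ^ 2 * ‖h‖ ^ 2 := by ring
  have hQ : ∀ h : H, RCLike.re (inner ℂ (C h) h : ℂ) = ∑' γ, (w γ : ℝ) * ‖S γ h‖ ^ 2 := by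
    intro h; rw [hC]; simp
  have hupper : ∀ h : H, RCLike.re (inner ℂ (C h) h : ℂ) ≤ M * ‖h‖ ^ 2 := by
    intro h
    rw [hQ]
    have : ∑' γ, (w γ : ℝ) * ‖S γ h‖ ^ 2 ≤ ∑' γ, ((w γ : ℝ) * ‖z γ‖ ^ 2) * ‖h‖ ^ 2 := by
      refine Summable.tsum_le_tsum (fun γ => ?_) (hsum h) (hw.mul_right _)
      have h2 : ‖S γ h‖ ^ 2 ≤ (‖z γ‖ * ‖h‖) ^ 2 := pow_le_pow_left₀ (norm_nonneg _) (hSle γ h) 2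
      calc (w γ : ℝ) * ‖S γ h‖ ^ 2 ≤ (w γ : ℝ) * (‖z γ‖ * ‖h‖) ^ 2 :=
            mul_le_mul_of_nonneg_left h2 (w γ).coe_nonneg
        _ = (w γ : ℝ) * ‖z γ‖ ^ 2 * ‖h‖ ^ 2 := by ring
    rwa [tsum_mul_right] at this
  -- positivity and order
  have hCpos : C.IsPositive := by
    rw [ContinuousLinearMap.isPositive_iff_complex]
    intro x
    refine ⟨by rw [hC]; simp, ?_⟩
    rw [hQ]
    exact tsum_nonneg fun γ => by positivity
  have hle : C ≤ ((M : ℂ)) • (1 : H →L[ℂ] H) := by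
    rw [ContinuousLinearMap.le_def, ContinuousLinearMap.isPositive_iff_complex]
    intro x
    have key : (inner ℂ ((((M : ℂ)) • (1 : H →L[ℂ] H) - C) x) x : ℂ)
        = ((M * ‖x‖ ^ 2 - ∑' γ, (w γ : ℝ) * ‖S γ x‖ ^ 2 : ℝ) : ℂ) := by
      rw [ContinuousLinearMap.sub_apply, inner_sub_left, hC,
        ContinuousLinearMap.smul_apply, ContinuousLinearMap.one_apply, inner_smul_left,
        inner_self_eq_norm_sq_to_K]
      simp only [Complex.conj_ofReal]
      rw [Complex.ofReal_sub, Complex.ofReal_mul, Complex.ofReal_pow]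
      exact rfl
    rw [key]
    constructor
    · simp only [RCLike.re_to_complex, Complex.ofReal_re]
    · simp only [RCLike.re_to_complex, Complex.ofReal_re, sub_nonneg]
      have := hupper x
      rw [hQ] at this
      linarith
  have hC0 : (0 : H →L[ℂ] H) ≤ C := (ContinuousLinearMap.nonneg_iff_isPositive C).mpr hCpos
  have hnorm_le : ‖C‖ ≤ M := by
    have h1 : ‖C‖ ≤ ‖((M : ℂ)) • (1 : H →L[ℂ] H)‖ :=
      CStarAlgebra.norm_le_norm_of_nonneg_of_le hC0 hle
    rwa [norm_smul, norm_one, mul_one, Complex.norm_real, Real.norm_eq_abs,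
      abs_of_nonneg hM0] at h1
  -- lower bound
  have hlow : M ≤ ‖C‖ := by
    have h0 : RCLike.re (inner ℂ (C (z 0)) (z 0) : ℂ) = M := by
      rw [hQ]
      refine tsum_congr fun γ => ?_
      rw [hS, add_zero]
    have h1 : M ≤ ‖C (z 0)‖ * ‖z 0‖ := by
      rw [← h0]; exact re_inner_le_norm _ _
    calc M ≤ ‖C (z 0)‖ * ‖z 0‖ := h1
      _ ≤ (‖C‖ * ‖z 0‖) * ‖z 0‖ :=
          mul_le_mul_of_nonneg_right (C.le_opNorm _) (norm_nonneg _)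
      _ = ‖C‖ := by rw [hz0]; ring
  linarith
end

section
/- (Main theorem: random multipliers satisfy the true column-row property.) The row and column operators satisfy ‖R‖ ≤ ‖C‖. -/
open scoped NNReal

/-- Bridge between the `RCLike` coercion `ℝ → ℂ` and `Complex.ofReal`. -/
lemma aux_bridge (r : ℝ) : (RCLike.ofReal r : ℂ) = Complex.ofReal r := by
  rw [show (RCLike.ofReal : ℝ → ℂ) = ⇑(algebraMap ℝ ℂ) from (RCLike.algebraMap_eq_ofReal).symm,
    Complex.coe_algebraMap]

/-- `⟪x, x⟫ = ‖x‖²` in a complex inner product space, with `Complex.ofReal` coercion. -/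
lemma aux_inner_self {H : Type*} [NormedAddCommGroup H] [InnerProductSpace ℂ H] (x : H) :
    (inner ℂ x x : ℂ) = ((‖x‖ ^ 2 : ℝ) : ℂ) := by
  rw [inner_self_eq_norm_sq_to_K, aux_bridge]
  norm_cast

/-- Pythagoras for a finite pairwise-orthogonal family. -/
lemma aux_norm_sq_sum {H : Type*} [NormedAddCommGroup H] [InnerProductSpace ℂ H]
    {ι : Type*} (s : Finset ι) (v : ι → H)
    (ho : ∀ i ∈ s, ∀ j ∈ s, i ≠ j → (inner ℂ (v i) (v j) : ℂ) = 0) :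
    ‖∑ i ∈ s, v i‖ ^ 2 = ∑ i ∈ s, ‖v i‖ ^ 2 := by
  have key : (((‖∑ i ∈ s, v i‖ ^ 2 : ℝ)) : ℂ)
      = ((∑ i ∈ s, ‖v i‖ ^ 2 : ℝ) : ℂ) := by
    calc (((‖∑ i ∈ s, v i‖ ^ 2 : ℝ)) : ℂ)
        = inner ℂ (∑ i ∈ s, v i) (∑ j ∈ s, v j) :=
          (aux_inner_self _).symm
      _ = ∑ i ∈ s, inner ℂ (v i) (∑ j ∈ s, v j) := sum_inner _ _ _
      _ = ∑ i ∈ s, ∑ j ∈ s, (inner ℂ (v i) (v j) : ℂ) := by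
          refine Finset.sum_congr rfl fun i _ => ?_
          exact inner_sum _ _ _
      _ = ∑ i ∈ s, (inner ℂ (v i) (v i) : ℂ) := by
          refine Finset.sum_congr rfl fun i hi => ?_
          exact Finset.sum_eq_single_of_mem i hi
            (fun j hj hji => ho i hi j hj (Ne.symm hji))
      _ = ∑ i ∈ s, (((‖v i‖ ^ 2 : ℝ)) : ℂ) := by
          refine Finset.sum_congr rfl fun i _ => ?_
          exact aux_inner_self _
      _ = ((∑ i ∈ s, ‖v i‖ ^ 2 : ℝ) : ℂ) := by push_cast; ring
  exact_mod_cast key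

/-- The monomial shift `S γ` has operator-norm bound `‖z γ‖`. -/
lemma aux_shift_bound {H : Type*} [NormedAddCommGroup H] [InnerProductSpace ℂ H]
    [CompleteSpace H] {Γ : Type*} [AddCancelMonoid Γ]
    (z : Γ → H)
    (hz_orth : ∀ α β, α ≠ β → (inner ℂ (z α) (z β) : ℂ) = 0)
    (hz_dense : (Submodule.span ℂ (Set.range z)).topologicalClosure = ⊤)
    (hcomm : ∀ α β, ‖z (α + β)‖ ≤ ‖z α‖ * ‖z β‖)
    (S : Γ → H →L[ℂ] H) (hS : ∀ γ β, S γ (z β) = z (γ + β))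
    (γ : Γ) (h : H) : ‖S γ h‖ ≤ ‖z γ‖ * ‖h‖ := by
  have hclosed : IsClosed {x : H | ‖S γ x‖ ≤ ‖z γ‖ * ‖x‖} := by
    apply isClosed_le
    · exact ((S γ).continuous.norm)
    · exact continuous_const.mul continuous_norm
  have hspan : (Submodule.span ℂ (Set.range z) : Set H)
      ⊆ {x : H | ‖S γ x‖ ≤ ‖z γ‖ * ‖x‖} := by
    intro x hx
    obtain ⟨c, rfl⟩ := Finsupp.mem_span_range_iff_exists_finsupp.mp hx
    rw [Finsupp.sum]
    set s := c.support
    have himg : S γ (∑ i ∈ s, c i • z i) = ∑ i ∈ s, c i • z (γ + i) := by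
      rw [map_sum]
      exact Finset.sum_congr rfl fun i _ => by rw [map_smul, hS]
    have h1 : ‖∑ i ∈ s, c i • z (γ + i)‖ ^ 2 = ∑ i ∈ s, ‖c i • z (γ + i)‖ ^ 2 := by
      refine aux_norm_sq_sum s _ fun i _ j _ hij => ?_
      rw [inner_smul_left, inner_smul_right,
        hz_orth (γ + i) (γ + j) (fun hc => hij (add_left_cancel hc))]
      ring
    have h2 : ‖∑ i ∈ s, c i • z i‖ ^ 2 = ∑ i ∈ s, ‖c i • z i‖ ^ 2 := by
      refine aux_norm_sq_sum s _ fun i _ j _ hij => ?_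
      rw [inner_smul_left, inner_smul_right, hz_orth i j hij]
      ring
    have hterm : ∀ i ∈ s, ‖c i • z (γ + i)‖ ^ 2
        ≤ ‖z γ‖ ^ 2 * ‖c i • z i‖ ^ 2 := by
      intro i _
      rw [norm_smul, norm_smul, mul_pow, mul_pow, ← mul_assoc,
        mul_comm (‖z γ‖ ^ 2) (‖c i‖ ^ 2), mul_assoc]
      refine mul_le_mul_of_nonneg_left ?_ (by positivity)
      rw [← mul_pow]
      exact pow_le_pow_left₀ (norm_nonneg _) (hcomm γ i) 2
    have hsq : ‖S γ (∑ i ∈ s, c i • z i)‖ ^ 2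
        ≤ (‖z γ‖ * ‖∑ i ∈ s, c i • z i‖) ^ 2 := by
      rw [himg, h1, mul_pow, h2, Finset.mul_sum]
      exact Finset.sum_le_sum hterm
    have h3 : (0 : ℝ) ≤ ‖S γ (∑ i ∈ s, c i • z i)‖ := norm_nonneg _
    have h4 : (0 : ℝ) ≤ ‖z γ‖ * ‖∑ i ∈ s, c i • z i‖ := by positivity
    calc ‖S γ (∑ i ∈ s, c i • z i)‖
        = Real.sqrt (‖S γ (∑ i ∈ s, c i • z i)‖ ^ 2) := by
          rw [Real.sqrt_sq h3]
      _ ≤ Real.sqrt ((‖z γ‖ * ‖∑ i ∈ s, c i • z i‖) ^ 2) := Real.sqrt_le_sqrt hsq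
      _ = ‖z γ‖ * ‖∑ i ∈ s, c i • z i‖ := Real.sqrt_sq h4
  have hcl : closure (Submodule.span ℂ (Set.range z) : Set H)
      ⊆ {x : H | ‖S γ x‖ ≤ ‖z γ‖ * ‖x‖} := closure_minimal hspan hclosed
  apply hcl
  have : ((Submodule.span ℂ (Set.range z)).topologicalClosure : Set H)
      = closure (Submodule.span ℂ (Set.range z) : Set H) :=
    Submodule.topologicalClosure_coe _
  rw [← this, hz_dense]
  trivial

/-- Main theorem: random multipliers satisfy the true column-row property:
`‖R‖ ≤ ‖C‖` for the row and column operators of a random multiplier model. -/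
theorem stmt_6
    {H : Type*} [NormedAddCommGroup H] [InnerProductSpace ℂ H] [CompleteSpace H]
    {Γ : Type*} [AddCancelMonoid Γ]
    (z : Γ → H)
    (hz_ne : ∀ α, z α ≠ 0)
    (hz_orth : ∀ α β, α ≠ β → (inner ℂ (z α) (z β) : ℂ) = 0)
    (hz_dense : (Submodule.span ℂ (Set.range z)).topologicalClosure = ⊤)
    (hz0 : ‖z 0‖ = 1)
    (hcomm : ∀ α β, ‖z (α + β)‖ ≤ ‖z α‖ * ‖z β‖)
    (w : Γ → ℝ≥0)
    (hw : Summable fun γ => (w γ : ℝ) * ‖z γ‖ ^ 2)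
    (S : Γ → H →L[ℂ] H) (hS : ∀ γ β, S γ (z β) = z (γ + β))
    (R : H →L[ℂ] H)
    (hR : ∀ h : H, (inner ℂ (R h) h : ℂ)
        = ((∑' γ, (w γ : ℝ) * ‖(ContinuousLinearMap.adjoint (S γ)) h‖ ^ 2 : ℝ) : ℂ))
    (C : H →L[ℂ] H)
    (hC : ∀ h : H, (inner ℂ (C h) h : ℂ)
        = ((∑' γ, (w γ : ℝ) * ‖S γ h‖ ^ 2 : ℝ) : ℂ)) :
    ‖R‖ ≤ ‖C‖ := by
  have : Nontrivial H := ⟨⟨z 0, 0, hz_ne 0⟩⟩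
  set M : ℝ := ∑' γ, (w γ : ℝ) * ‖z γ‖ ^ 2 with hM
  have hM0 : 0 ≤ M := tsum_nonneg fun γ => by positivity
  -- operator norm bound on the shifts
  have hSop : ∀ γ, ‖S γ‖ ≤ ‖z γ‖ := fun γ =>
    ContinuousLinearMap.opNorm_le_bound _ (norm_nonneg _)
      (aux_shift_bound z hz_orth hz_dense hcomm S hS γ)
  have hadj : ∀ γ (x : H),
      ‖(ContinuousLinearMap.adjoint (S γ)) x‖ ≤ ‖z γ‖ * ‖x‖ := by
    intro γ x
    calc ‖(ContinuousLinearMap.adjoint (S γ)) x‖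
        ≤ ‖ContinuousLinearMap.adjoint (S γ)‖ * ‖x‖ :=
          (ContinuousLinearMap.adjoint (S γ)).le_opNorm x
      _ = ‖S γ‖ * ‖x‖ := by
          rw [(ContinuousLinearMap.adjoint
            : (H →L[ℂ] H) ≃ₗᵢ⋆[ℂ] (H →L[ℂ] H)).norm_map (S γ)]
      _ ≤ ‖z γ‖ * ‖x‖ := mul_le_mul_of_nonneg_right (hSop γ) (norm_nonneg _)
  -- the key pointwise quadratic-form bound for R
  have hQle : ∀ x : H,
      (∑' γ, (w γ : ℝ) * ‖(ContinuousLinearMap.adjoint (S γ)) x‖ ^ 2)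
        ≤ M * ‖x‖ ^ 2 := by
    intro x
    have hterm : ∀ γ, (w γ : ℝ) * ‖(ContinuousLinearMap.adjoint (S γ)) x‖ ^ 2
        ≤ (w γ : ℝ) * ‖z γ‖ ^ 2 * ‖x‖ ^ 2 := by
      intro γ
      rw [mul_assoc, ← mul_pow]
      exact mul_le_mul_of_nonneg_left
        (pow_le_pow_left₀ (norm_nonneg _) (hadj γ x) 2) (w γ).coe_nonneg
    have hsum2 : Summable fun γ => (w γ : ℝ) * ‖z γ‖ ^ 2 * ‖x‖ ^ 2 :=
      hw.mul_right _
    have hsum1 : Summable fun γ =>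
        (w γ : ℝ) * ‖(ContinuousLinearMap.adjoint (S γ)) x‖ ^ 2 :=
      Summable.of_nonneg_of_le (fun γ => by positivity) hterm hsum2
    calc (∑' γ, (w γ : ℝ) * ‖(ContinuousLinearMap.adjoint (S γ)) x‖ ^ 2)
        ≤ ∑' γ, (w γ : ℝ) * ‖z γ‖ ^ 2 * ‖x‖ ^ 2 :=
          Summable.tsum_le_tsum hterm hsum1 hsum2
      _ = M * ‖x‖ ^ 2 := by rw [tsum_mul_right]
  -- R is positive
  have hRpos : R.IsPositive := by
    rw [ContinuousLinearMap.isPositive_iff_complex]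
    intro x
    rw [hR x]
    refine ⟨by simp, ?_⟩
    simp only [RCLike.re_to_complex, Complex.ofReal_re]
    exact tsum_nonneg fun γ => by positivity
  -- R ≤ M • 1
  have hle : R ≤ (M : ℂ) • (1 : H →L[ℂ] H) := by
    rw [ContinuousLinearMap.le_def, ContinuousLinearMap.isPositive_iff_complex]
    intro x
    have hval : (inner ℂ (((M : ℂ) • (1 : H →L[ℂ] H) - R) x) x : ℂ)
        = ((M * ‖x‖ ^ 2
          - ∑' γ, (w γ : ℝ) * ‖(ContinuousLinearMap.adjoint (S γ)) x‖ ^ 2 : ℝ) : ℂ) := by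
      rw [ContinuousLinearMap.sub_apply, inner_sub_left,
        ContinuousLinearMap.smul_apply, ContinuousLinearMap.one_apply,
        inner_smul_left, aux_inner_self, hR x, Complex.conj_ofReal]
      push_cast
      ring
    rw [hval]
    refine ⟨by simp only [RCLike.re_to_complex, Complex.ofReal_re], ?_⟩
    simp only [RCLike.re_to_complex, Complex.ofReal_re]
    have := hQle x
    linarith
  -- hence ‖R‖ ≤ M
  have hRM : ‖R‖ ≤ M := by
    have h0R : (0 : H →L[ℂ] H) ≤ R := (ContinuousLinearMap.nonneg_iff_isPositive R).mpr hRpos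
    have := CStarAlgebra.norm_le_norm_of_nonneg_of_le h0R hle
    calc ‖R‖ ≤ ‖(M : ℂ) • (1 : H →L[ℂ] H)‖ := this
      _ = ‖(M : ℂ)‖ * ‖(1 : H →L[ℂ] H)‖ := norm_smul _ _
      _ = M := by
          rw [norm_one, mul_one, Complex.norm_real, Real.norm_of_nonneg hM0]
  -- lower bound: M ≤ ‖C‖
  have hCM : M ≤ ‖C‖ := by
    have h0 : (inner ℂ (C (z 0)) (z 0) : ℂ) = (M : ℂ) := by
      rw [hC (z 0), hM]
      norm_cast
      refine tsum_congr fun γ => ?_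
      rw [hS γ 0, add_zero]
    have hb : ‖(inner ℂ (C (z 0)) (z 0) : ℂ)‖ ≤ ‖C (z 0)‖ * ‖z 0‖ :=
      norm_inner_le_norm _ _
    rw [h0] at hb
    have hM' : ‖((M : ℝ) : ℂ)‖ = M := by
      rw [Complex.norm_real, Real.norm_of_nonneg hM0]
    rw [hM', hz0, mul_one] at hb
    calc M ≤ ‖C (z 0)‖ := hb
      _ ≤ ‖C‖ * ‖z 0‖ := C.le_opNorm _
      _ = ‖C‖ := by rw [hz0, mul_one]
  linarith
end

section
/- Let w : Γ → ℝ≥0 be finitely supported and let S γ be a monomial shift for each γ in the support of w. Then ‖∑_γ w γ • (S γ ∘ (S γ)†)‖ ≤ ‖∑_γ w γ • ((S γ)† ∘ S γ)‖, where the sums are finite sums of bounded operators over the support of w. -/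
open scoped NNReal
open ContinuousLinearMap

lemma pyth {H : Type*} [NormedAddCommGroup H] [InnerProductSpace ℂ H]
    {ι : Type*} (s : Finset ι) (v : ι → H)
    (hv : ∀ i ∈ s, ∀ j ∈ s, i ≠ j → (inner ℂ (v i) (v j) : ℂ) = 0) (c : ι → ℂ) :
    ‖∑ i ∈ s, c i • v i‖ ^ 2 = ∑ i ∈ s, ‖c i‖ ^ 2 * ‖v i‖ ^ 2 := by
  have h : (inner ℂ (∑ i ∈ s, c i • v i) (∑ i ∈ s, c i • v i) : ℂ)
      = ((∑ i ∈ s, ‖c i‖ ^ 2 * ‖v i‖ ^ 2 : ℝ) : ℂ) := by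
    rw [sum_inner]
    push_cast
    refine Finset.sum_congr rfl (fun i hi => ?_)
    rw [inner_sum, Finset.sum_eq_single i (fun j hj hne => by
        rw [inner_smul_left, inner_smul_right, hv i hi j hj (Ne.symm hne)]; ring)
      (fun h => absurd hi h)]
    rw [inner_smul_left, inner_smul_right, ← mul_assoc, RCLike.conj_mul,
      inner_self_eq_norm_sq_to_K]
    norm_cast
  rw [InnerProductSpace.norm_sq_eq_re_inner (𝕜 := ℂ), h]
  exact RCLike.ofReal_re _

lemma shift_norm_le {H : Type*} [NormedAddCommGroup H] [InnerProductSpace ℂ H]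
    {Γ : Type*} [AddCancelMonoid Γ]
    (z : Γ → H)
    (hz_orth : ∀ α β, α ≠ β → (inner ℂ (z α) (z β) : ℂ) = 0)
    (hz_dense : (Submodule.span ℂ (Set.range z)).topologicalClosure = ⊤)
    (hcomm : ∀ α β, ‖z (α + β)‖ ≤ ‖z α‖ * ‖z β‖)
    (γ : Γ) (T : H →L[ℂ] H) (hT : ∀ β, T (z β) = z (γ + β)) :
    ‖T‖ ≤ ‖z γ‖ := by
  refine opNorm_le_bound _ (norm_nonneg _) (fun x => ?_)
  have hK : IsClosed {x : H | ‖T x‖ ≤ ‖z γ‖ * ‖x‖} := by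
    apply isClosed_le
    · exact T.continuous.norm
    · exact continuous_const.mul continuous_norm
  have hxmem : x ∈ closure ((Submodule.span ℂ (Set.range z) : Submodule ℂ H) : Set H) := by
    have : x ∈ (Submodule.span ℂ (Set.range z)).topologicalClosure := by
      rw [hz_dense]; trivial
    exact this
  have hsub : ((Submodule.span ℂ (Set.range z) : Submodule ℂ H) : Set H)
      ⊆ {x : H | ‖T x‖ ≤ ‖z γ‖ * ‖x‖} := by
    intro x hx
    obtain ⟨c, rfl⟩ := Finsupp.mem_span_range_iff_exists_finsupp.mp hx
    rw [Finsupp.sum]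
    have hx2 : ‖∑ i ∈ c.support, c i • z i‖ ^ 2 = ∑ i ∈ c.support, ‖c i‖ ^ 2 * ‖z i‖ ^ 2 :=
      pyth _ _ (fun i _ j _ hij => hz_orth i j hij) _
    have hTx : T (∑ i ∈ c.support, c i • z i) = ∑ i ∈ c.support, c i • z (γ + i) := by
      rw [map_sum]
      exact Finset.sum_congr rfl (fun i _ => by rw [T.map_smul, hT])
    have hTx2 : ‖T (∑ i ∈ c.support, c i • z i)‖ ^ 2
        = ∑ i ∈ c.support, ‖c i‖ ^ 2 * ‖z (γ + i)‖ ^ 2 := by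
      rw [hTx]
      exact pyth _ _ (fun i _ j _ hij => hz_orth _ _ (fun h => hij (add_left_cancel h))) _
    have key : ‖T (∑ i ∈ c.support, c i • z i)‖ ^ 2
        ≤ (‖z γ‖ * ‖∑ i ∈ c.support, c i • z i‖) ^ 2 := by
      rw [hTx2, mul_pow, hx2, Finset.mul_sum]
      refine Finset.sum_le_sum (fun i _ => ?_)
      have := hcomm γ i
      have h2 : ‖z (γ + i)‖ ^ 2 ≤ (‖z γ‖ * ‖z i‖) ^ 2 :=
        pow_le_pow_left₀ (norm_nonneg _) this 2
      nlinarith [norm_nonneg (c i), sq_nonneg (‖c i‖)]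
    exact (pow_le_pow_iff_left₀ (norm_nonneg _)
      (mul_nonneg (norm_nonneg _) (norm_nonneg _)) two_ne_zero).mp key
  exact hK.closure_subset_iff.mpr hsub hxmem

/-- For finitely supported weights `w` and monomial shifts `S γ` (for `γ` in the
support of `w`), `‖∑ γ, w γ • (S γ ∘ (S γ)†)‖ ≤ ‖∑ γ, w γ • ((S γ)† ∘ S γ)‖`. -/
theorem stmt_7
    {H : Type*} [NormedAddCommGroup H] [InnerProductSpace ℂ H] [CompleteSpace H]
    {Γ : Type*} [AddCancelMonoid Γ]
    (z : Γ → H)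
    (hz_ne : ∀ α, z α ≠ 0)
    (hz_orth : ∀ α β, α ≠ β → (inner ℂ (z α) (z β) : ℂ) = 0)
    (hz_dense : (Submodule.span ℂ (Set.range z)).topologicalClosure = ⊤)
    (hz0 : ‖z 0‖ = 1)
    (hcomm : ∀ α β, ‖z (α + β)‖ ≤ ‖z α‖ * ‖z β‖)
    (w : Γ →₀ ℝ≥0)
    (S : Γ → H →L[ℂ] H) (hS : ∀ γ ∈ w.support, ∀ β, S γ (z β) = z (γ + β)) :
    ‖∑ γ ∈ w.support, ((w γ : ℝ) : ℂ) • (S γ ∘L ContinuousLinearMap.adjoint (S γ))‖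
      ≤ ‖∑ γ ∈ w.support, ((w γ : ℝ) : ℂ) • (ContinuousLinearMap.adjoint (S γ) ∘L S γ)‖ := by
  set A := ∑ γ ∈ w.support, ((w γ : ℝ) : ℂ) • (ContinuousLinearMap.adjoint (S γ) ∘L S γ) with hA
  -- middle quantity
  have hmid : ‖∑ γ ∈ w.support, ((w γ : ℝ) : ℂ) • (S γ ∘L ContinuousLinearMap.adjoint (S γ))‖
      ≤ ∑ γ ∈ w.support, (w γ : ℝ) * ‖z γ‖ ^ 2 := by
    refine (norm_sum_le _ _).trans ?_
    refine Finset.sum_le_sum (fun γ hγ => ?_)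
    rw [norm_smul]
    have h1 : ‖S γ ∘L ContinuousLinearMap.adjoint (S γ)‖ = ‖S γ‖ * ‖S γ‖ := by
      have e1 : ContinuousLinearMap.adjoint (ContinuousLinearMap.adjoint (S γ))
          ∘L ContinuousLinearMap.adjoint (S γ) = S γ ∘L ContinuousLinearMap.adjoint (S γ) := by
        rw [ContinuousLinearMap.adjoint_adjoint]
      rw [← e1, ContinuousLinearMap.norm_adjoint_comp_self,
        LinearIsometryEquiv.norm_map ContinuousLinearMap.adjoint (S γ)]
    have h2 : ‖S γ‖ ≤ ‖z γ‖ := shift_norm_le z hz_orth hz_dense hcomm γ (S γ) (hS γ hγ)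
    have h3 : ‖((w γ : ℝ) : ℂ)‖ = (w γ : ℝ) := by
      rw [Complex.norm_real, Real.norm_eq_abs, abs_of_nonneg (w γ).coe_nonneg]
    rw [h1, h3, sq]
    exact mul_le_mul_of_nonneg_left
      (mul_le_mul h2 h2 (norm_nonneg _) (norm_nonneg _)) (w γ).coe_nonneg
  refine hmid.trans ?_
  -- lower bound for RHS
  have hAz : (inner ℂ (z 0) (A (z 0)) : ℂ) = ((∑ γ ∈ w.support, (w γ : ℝ) * ‖z γ‖ ^ 2 : ℝ) : ℂ) := by
    rw [hA]
    simp only [ContinuousLinearMap.sum_apply, ContinuousLinearMap.smul_apply,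
      ContinuousLinearMap.comp_apply]
    rw [inner_sum]
    push_cast
    refine Finset.sum_congr rfl (fun γ hγ => ?_)
    rw [inner_smul_right, ContinuousLinearMap.adjoint_inner_right, hS γ hγ 0, add_zero,
      inner_self_eq_norm_sq_to_K]
    simp
  have hnn : 0 ≤ ∑ γ ∈ w.support, (w γ : ℝ) * ‖z γ‖ ^ 2 :=
    Finset.sum_nonneg (fun γ _ => mul_nonneg (w γ).coe_nonneg (sq_nonneg _))
  calc ∑ γ ∈ w.support, (w γ : ℝ) * ‖z γ‖ ^ 2
      = ‖(inner ℂ (z 0) (A (z 0)) : ℂ)‖ := by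
        rw [hAz, Complex.norm_real, Real.norm_eq_abs, abs_of_nonneg hnn]
    _ ≤ ‖z 0‖ * ‖A (z 0)‖ := norm_inner_le_norm _ _
    _ ≤ ‖z 0‖ * (‖A‖ * ‖z 0‖) := by
        exact mul_le_mul_of_nonneg_left (A.le_opNorm _) (norm_nonneg _)
    _ = ‖A‖ := by rw [hz0]; ring
end

section
/- Let μ be a nondegenerate Borel probability measure on H. Then there exists a countable set A ⊆ H whose closed linear span is all of H and such that every a ∈ A lies in the support of μ, i.e. μ U > 0 for every open set U containing a. -/
open MeasureTheory

/-- If `μ` is a nondegenerate Borel probability measure on a separable complex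
Hilbert space `H`, there is a countable set `A ⊆ H` whose closed linear span is `H` and all of
whose points lie in the support of `μ`. -/
theorem stmt_9
    {H : Type*} [NormedAddCommGroup H] [InnerProductSpace ℂ H] [CompleteSpace H]
    [TopologicalSpace.SeparableSpace H]
    [MeasurableSpace H] [BorelSpace H]
    (μ : Measure H) [IsProbabilityMeasure μ]
    (hμ : ∀ g : H, g ≠ 0 → μ {x : H | (inner ℂ g x : ℂ) = 0} < 1) :
    ∃ A : Set H, A.Countable ∧ (Submodule.span ℂ A).topologicalClosure = ⊤ ∧
      ∀ a ∈ A, ∀ U : Set H, IsOpen U → a ∈ U → 0 < μ U := by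
  obtain ⟨B, hBc, -, hBbasis⟩ := TopologicalSpace.exists_countable_basis H
  -- the union of null basic open sets
  set N : Set H := ⋃₀ {b ∈ B | μ b = 0} with hN
  have hNnull : μ N = 0 := by
    exact (measure_sUnion_null_iff (hBc.mono (Set.sep_subset _ _))).2 fun b hb => hb.2
  -- the support
  set S : Set H := Nᶜ with hS
  have hsupp : ∀ x ∈ S, ∀ U : Set H, IsOpen U → x ∈ U → 0 < μ U := by
    intro x hx U hU hxU
    obtain ⟨b, hbB, hxb, hbU⟩ := hBbasis.exists_subset_of_mem_open hxU hU
    by_contra h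
    push_neg at h
    have hb0 : μ b = 0 := le_antisymm (le_trans (measure_mono hbU) h) zero_le
    exact hx (Set.mem_sUnion.2 ⟨b, ⟨hbB, hb0⟩, hxb⟩)
  have hNopen : IsOpen N := isOpen_sUnion fun b hb => hBbasis.isOpen hb.1
  have hSmeas : μ S = 1 := by
    have : μ S = μ Set.univ - μ N := by
      rw [hS, measure_compl hNopen.measurableSet (measure_ne_top μ N)]
    simp [this, hNnull]
  -- span of S is dense
  have hspan : (Submodule.span ℂ S).topologicalClosure = ⊤ := by
    rw [Submodule.topologicalClosure_eq_top_iff]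
    by_contra h
    obtain ⟨g, hgmem, hg0⟩ := Submodule.exists_mem_ne_zero_of_ne_bot h
    have hsub : S ⊆ {x : H | (inner ℂ g x : ℂ) = 0} := fun x hx =>
      inner_eq_zero_symm.1 (hgmem x (Submodule.subset_span hx))
    have : (1 : ENNReal) ≤ μ {x : H | (inner ℂ g x : ℂ) = 0} := by
      rw [← hSmeas]; exact measure_mono hsub
    exact absurd (lt_of_le_of_lt this (hμ g hg0)) (lt_irrefl _)
  -- countable dense subset of S
  obtain ⟨A, hAS, hAc, hSA⟩ :=
    (TopologicalSpace.IsSeparable.of_separableSpace S).exists_countable_dense_subset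
  refine ⟨A, hAc, ?_, fun a ha => hsupp a (hAS ha)⟩
  rw [eq_top_iff, ← hspan]
  apply Submodule.topologicalClosure_minimal
  · apply Submodule.span_le.2
    intro x hx
    exact ((Submodule.span ℂ A).isClosed_topologicalClosure.closure_subset_iff.2
      (fun a ha => Submodule.le_topologicalClosure _ (Submodule.subset_span ha))) (hSA hx)
  · exact (Submodule.span ℂ A).isClosed_topologicalClosure
end

section
/- (Random basis lemma.) Let (Ω, P) be a probability space and X : ℕ → Ω → H an i.i.d. sequence of Borel-measurable random variables each with nondegenerate distribution μ. Then for P-almost every ω ∈ Ω, the closed linear span of {X n ω : n ∈ ℕ} equals H. -/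
open MeasureTheory

/-- Random basis lemma: if `X n` is an i.i.d. sequence of random vectors in a
separable complex Hilbert space with nondegenerate common distribution `μ`, then almost surely
the closed linear span of `{X n ω : n ∈ ℕ}` is all of `H`. -/
theorem stmt_10
    {H : Type*} [NormedAddCommGroup H] [InnerProductSpace ℂ H] [CompleteSpace H]
    [TopologicalSpace.SeparableSpace H]
    [MeasurableSpace H] [BorelSpace H]
    {Ω : Type*} [MeasurableSpace Ω]
    (P : Measure Ω) [IsProbabilityMeasure P]
    (X : ℕ → Ω → H)
    (hmeas : ∀ n, Measurable (X n))
    (μ : Measure H)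
    (hdist : ∀ n, Measure.map (X n) P = μ)
    (hindep : ProbabilityTheory.iIndepFun X P)
    (hμ : ∀ g : H, g ≠ 0 → μ {x : H | (inner ℂ g x : ℂ) = 0} < 1) :
    ∀ᵐ ω ∂P,
      (Submodule.span ℂ (Set.range fun n => X n ω)).topologicalClosure = ⊤ := by
  have hμprob : IsProbabilityMeasure μ := by
    rw [← hdist 0]
    exact Measure.isProbabilityMeasure_map (hmeas 0).aemeasurable
  -- countable topological basis
  obtain ⟨b, hbc, -, hb⟩ := TopologicalSpace.exists_countable_basis H
  -- for each basis set `s` of positive measure, a.s. some `X n` lands in `s`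
  have key : ∀ s ∈ b, μ s ≠ 0 → P {ω | ∀ n, X n ω ∉ s} = 0 := by
    intro s hs hμs
    have hso : IsOpen s := hb.isOpen hs
    have hsm : MeasurableSet s := hso.measurableSet
    have hc : μ sᶜ < 1 := by
      have : μ sᶜ = 1 - μ s := prob_compl_eq_one_sub hsm
      rw [this]
      exact ENNReal.sub_lt_self ENNReal.one_ne_top one_ne_zero hμs
    have hbound : ∀ N : ℕ, P {ω | ∀ n, X n ω ∉ s} ≤ (μ sᶜ) ^ N := by
      intro N
      have hsub : {ω | ∀ n, X n ω ∉ s} ⊆ ⋂ n ∈ Finset.range N, X n ⁻¹' sᶜ := by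
        intro ω hω
        simp only [Set.mem_iInter]
        intro n _
        exact hω n
      have hmul := hindep.measure_inter_preimage_eq_mul (S := Finset.range N)
        (sets := fun _ => sᶜ) (fun i _ => hsm.compl)
      have hone : ∀ n : ℕ, P (X n ⁻¹' sᶜ) = μ sᶜ := by
        intro n
        rw [← hdist n, Measure.map_apply (hmeas n) hsm.compl]
      calc P {ω | ∀ n, X n ω ∉ s} ≤ P (⋂ n ∈ Finset.range N, X n ⁻¹' sᶜ) :=
            measure_mono hsub
        _ = ∏ n ∈ Finset.range N, P (X n ⁻¹' sᶜ) := hmul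
        _ = ∏ n ∈ Finset.range N, μ sᶜ := by
            exact Finset.prod_congr rfl fun n _ => hone n
        _ = (μ sᶜ) ^ N := by rw [Finset.prod_const, Finset.card_range]
    have htend : Filter.Tendsto (fun N : ℕ => (μ sᶜ) ^ N) Filter.atTop (nhds 0) :=
      ENNReal.tendsto_pow_atTop_nhds_zero_of_lt_one hc
    have : P {ω | ∀ n, X n ω ∉ s} ≤ 0 :=
      ge_of_tendsto htend (Filter.Eventually.of_forall hbound)
    exact le_antisymm this zero_le
  -- the a.s. good event
  have hae : ∀ᵐ ω ∂P, ∀ s ∈ b, μ s ≠ 0 → ∃ n, X n ω ∈ s := by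
    rw [ae_ball_iff hbc]
    intro s hs
    by_cases hμs : μ s = 0
    · filter_upwards with ω h; exact absurd hμs h
    · rw [ae_iff]
      have heq : {ω | ¬(μ s ≠ 0 → ∃ n, X n ω ∈ s)} = {ω | ∀ n, X n ω ∉ s} := by
        ext ω; simp [hμs, not_exists]
      rw [heq]
      exact key s hs hμs
  filter_upwards [hae] with ω hω
  by_contra hne
  set E := (Submodule.span ℂ (Set.range fun n => X n ω)).topologicalClosure with hE
  have hEc : Eᗮ ≠ ⊥ := by
    intro hbot
    exact hne (Submodule.orthogonal_eq_bot_iff.mp hbot)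
  obtain ⟨g, hgE, hg0⟩ := Submodule.exists_mem_ne_zero_of_ne_bot hEc
  -- the open set where ⟪g, x⟫ ≠ 0 has positive measure
  have hKlt := hμ g hg0
  have hKm : MeasurableSet {x : H | (inner ℂ g x : ℂ) = 0} :=
    measurableSet_eq_fun ((Continuous.inner continuous_const continuous_id).measurable)
      measurable_const
  have hopen : IsOpen {x : H | (inner ℂ g x : ℂ) ≠ 0} := by
    have : Continuous fun x : H => (inner ℂ g x : ℂ) :=
      Continuous.inner continuous_const continuous_id
    exact isOpen_compl_iff.mpr (isClosed_eq this continuous_const)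
  have hpos : μ {x : H | (inner ℂ g x : ℂ) ≠ 0} ≠ 0 := by
    intro h0
    have : μ {x : H | (inner ℂ g x : ℂ) = 0} = 1 := by
      have hcompl : {x : H | (inner ℂ g x : ℂ) = 0} = {x : H | (inner ℂ g x : ℂ) ≠ 0}ᶜ := by
        ext x; simp
      have hne : MeasurableSet {x : H | (inner ℂ g x : ℂ) ≠ 0} := hKm.compl
      rw [hcompl, prob_compl_eq_one_sub hne, h0, tsub_zero]
    exact absurd (this ▸ hKlt) (lt_irrefl _)
  -- find a basis set of positive measure inside it
  obtain ⟨S, hSb, hSeq⟩ := hb.open_eq_sUnion hopen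
  have hScount : S.Countable := hbc.mono hSb
  have : ∃ s ∈ S, μ s ≠ 0 := by
    by_contra hall
    push_neg at hall
    have : μ (⋃₀ S) = 0 := (measure_sUnion_null_iff hScount).mpr hall
    rw [← hSeq] at this
    exact hpos this
  obtain ⟨s, hsS, hμs⟩ := this
  obtain ⟨n, hn⟩ := hω s (hSb hsS) hμs
  -- X n ω is in E, hence orthogonal to g, contradiction
  have hmem : X n ω ∈ E := by
    apply Submodule.le_topologicalClosure
    exact Submodule.subset_span ⟨n, rfl⟩
  have hinner : (inner ℂ g (X n ω) : ℂ) = 0 := by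
    have := (Submodule.mem_orthogonal E g).mp hgE (X n ω) hmem
    simpa [inner_eq_zero_symm] using this
  have : X n ω ∈ {x : H | (inner ℂ g x : ℂ) ≠ 0} := hSeq ▸ Set.subset_sUnion_of_mem hsS hn
  exact this hinner
end

section
/- Let (Ω, P) be a probability space and X : ℕ → Ω → H an i.i.d. sequence of Borel-measurable random variables each with nondegenerate distribution μ. For ω ∈ Ω and n ∈ ℕ, let P_n(ω) denote the orthogonal projection of H onto the (finite-dimensional) span of {X 0 ω, …, X n ω}. Then for P-almost every ω, P_n(ω) h → h as n → ∞ for every h ∈ H; that is, P_n(ω) converges to the identity in the strong operator topology. -/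
open MeasureTheory Filter Finset Submodule
open InnerProductSpace

noncomputable section Aux11

variable {E : Type*} [NormedAddCommGroup E] [InnerProductSpace ℂ E]

local notation "⟪" x ", " y "⟫" => @inner ℂ _ _ x y

lemma pyth11 (a b : E) (h : ⟪a, b⟫ = 0) : ‖a + b‖ ^ 2 = ‖a‖ ^ 2 + ‖b‖ ^ 2 := by
  rw [@norm_add_sq ℂ _ _ _ _ a b, h]
  simp

/-- orthogonal projection of `t` onto span of `f 0, …, f n` via Gram-Schmidt. -/
def gsProj (f : ℕ → E) (n : ℕ) (t : E) : E :=
  ∑ j ∈ Finset.Iic n,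
    ((⟪gramSchmidt ℂ f j, t⟫ / (‖gramSchmidt ℂ f j‖ : ℂ) ^ 2) • gramSchmidt ℂ f j)

lemma gsProj_mem (f : ℕ → E) (n : ℕ) (t : E) :
    gsProj f n t ∈ span ℂ (f '' Set.Iic n) := by
  refine Submodule.sum_mem _ fun j hj => Submodule.smul_mem _ _ ?_
  exact gramSchmidt_mem_span ℂ f (Finset.mem_Iic.1 hj)

lemma gsProj_inner_gs (f : ℕ → E) (n : ℕ) (t : E) {j : ℕ} (hj : j ≤ n) :
    ⟪gramSchmidt ℂ f j, t - gsProj f n t⟫ = 0 := by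
  rw [inner_sub_right, gsProj, inner_sum]
  rw [Finset.sum_eq_single j]
  · rcases eq_or_ne (gramSchmidt ℂ f j) 0 with h0 | h0
    · simp [h0]
    · rw [inner_smul_right, inner_self_eq_norm_sq_to_K]
      have hb : ((‖gramSchmidt ℂ f j‖ : ℂ)) ^ 2 ≠ 0 := by
        simpa [sq_eq_zero_iff] using h0
      field_simp
      erw [div_self hb, sub_self, mul_zero]
  · intro i _ hij
    rw [inner_smul_right, gramSchmidt_orthogonal ℂ f (Ne.symm hij), mul_zero]
  · intro h; exact absurd (Finset.mem_Iic.2 hj) h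

lemma gsProj_orth (f : ℕ → E) (n : ℕ) (t : E) {v : E}
    (hv : v ∈ span ℂ (f '' Set.Iic n)) : ⟪v, t - gsProj f n t⟫ = 0 := by
  have hsub : span ℂ (f '' Set.Iic n) ≤ (ℂ ∙ (t - gsProj f n t))ᗮ := by
    rw [← span_gramSchmidt_Iic ℂ f n, Submodule.span_le]
    rintro _ ⟨j, hj, rfl⟩
    rw [SetLike.mem_coe, Submodule.mem_orthogonal_singleton_iff_inner_right]
    exact inner_eq_zero_symm.mp (gsProj_inner_gs f n t hj)
  have := hsub hv
  rw [Submodule.mem_orthogonal_singleton_iff_inner_right] at this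
  exact inner_eq_zero_symm.mp this

lemma gsProj_min (f : ℕ → E) (n : ℕ) (t : E) {v : E}
    (hv : v ∈ span ℂ (f '' Set.Iic n)) :
    ‖t - gsProj f n t‖ ≤ ‖t - v‖ ∧
      ‖t - v‖ ^ 2 = ‖t - gsProj f n t‖ ^ 2 + ‖gsProj f n t - v‖ ^ 2 := by
  have horth : ⟪t - gsProj f n t, gsProj f n t - v⟫ = 0 := by
    rw [inner_eq_zero_symm]
    exact gsProj_orth f n t (Submodule.sub_mem _ (gsProj_mem f n t) hv)
  have heq : t - v = (t - gsProj f n t) + (gsProj f n t - v) := by abel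
  have hsq : ‖t - v‖ ^ 2 = ‖t - gsProj f n t‖ ^ 2 + ‖gsProj f n t - v‖ ^ 2 := by
    rw [heq, pyth11 _ _ horth]
  refine ⟨?_, hsq⟩
  have h1 : ‖t - gsProj f n t‖ ^ 2 ≤ ‖t - v‖ ^ 2 := by nlinarith [sq_nonneg ‖gsProj f n t - v‖]
  nlinarith [norm_nonneg (t - gsProj f n t), norm_nonneg (t - v)]


lemma gsProj_norm_anti (f : ℕ → E) (t : E) {m n : ℕ} (hmn : m ≤ n) :
    ‖t - gsProj f n t‖ ≤ ‖t - gsProj f m t‖ :=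
  (gsProj_min f n t (Submodule.span_mono (Set.image_mono (f := f) (Set.Iic_subset_Iic.2 hmn))
    (gsProj_mem f m t))).1

lemma gsProj_sq_diff (f : ℕ → E) (t : E) {m n : ℕ} (hmn : m ≤ n) :
    ‖t - gsProj f m t‖ ^ 2 = ‖t - gsProj f n t‖ ^ 2 + ‖gsProj f n t - gsProj f m t‖ ^ 2 :=
  (gsProj_min f n t (Submodule.span_mono (Set.image_mono (f := f) (Set.Iic_subset_Iic.2 hmn))
    (gsProj_mem f m t))).2

lemma gsProj_cauchy (f : ℕ → E) (t : E) : CauchySeq (fun n => gsProj f n t) := by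
  set D : ℕ → ℝ := fun n => ‖t - gsProj f n t‖ ^ 2 with hD
  have hanti : Antitone D := by
    intro m n hmn
    have := gsProj_norm_anti f t hmn
    have h0 : (0:ℝ) ≤ ‖t - gsProj f n t‖ := norm_nonneg _
    simp only [hD]
    nlinarith
  have hbdd : BddBelow (Set.range D) := ⟨0, by rintro _ ⟨n, rfl⟩; positivity⟩
  have htend : Tendsto D atTop (nhds (⨅ n, D n)) := tendsto_atTop_ciInf hanti hbdd
  rw [Metric.cauchySeq_iff']
  intro ε hε
  have hε2 : (0:ℝ) < ε ^ 2 := by positivity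
  obtain ⟨N, hN⟩ := (htend.eventually (gt_mem_nhds (lt_add_of_pos_right _ hε2))).exists_forall_of_atTop
  refine ⟨N, fun n hn => ?_⟩
  have hsq : ‖gsProj f n t - gsProj f N t‖ ^ 2 = D N - D n := by
    have := gsProj_sq_diff f t hn
    simp only [hD] at *; linarith
  have hlo : ⨅ m, D m ≤ D n := ciInf_le hbdd n
  have hhi : D N < (⨅ m, D m) + ε ^ 2 := hN N le_rfl
  have : ‖gsProj f n t - gsProj f N t‖ ^ 2 < ε ^ 2 := by rw [hsq]; linarith
  rw [dist_eq_norm]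
  nlinarith [norm_nonneg (gsProj f n t - gsProj f N t)]

variable [CompleteSpace E]

/-- the limit of the projections of `t` onto span of `f 0, …, f n` as `n → ∞`. -/
def gsLim (f : ℕ → E) (t : E) : E := limUnder atTop (fun n => gsProj f n t)

lemma gsLim_tendsto (f : ℕ → E) (t : E) :
    Tendsto (fun n => gsProj f n t) atTop (nhds (gsLim f t)) :=
  (gsProj_cauchy f t).tendsto_limUnder

lemma gsLim_orth (f : ℕ → E) (t : E) {m : ℕ} {v : E}
    (hv : v ∈ span ℂ (f '' Set.Iic m)) : ⟪v, t - gsLim f t⟫ = 0 := by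
  have h1 : Tendsto (fun n => ⟪v, t - gsProj f n t⟫) atTop (nhds ⟪v, t - gsLim f t⟫) := by
    exact Tendsto.inner tendsto_const_nhds (tendsto_const_nhds.sub (gsLim_tendsto f t))
  have h2 : ∀ᶠ n in atTop, ⟪v, t - gsProj f n t⟫ = (0:ℂ) := by
    filter_upwards [eventually_ge_atTop m] with n hn
    exact gsProj_orth f n t
      (Submodule.span_mono (Set.image_mono (f := f) (Set.Iic_subset_Iic.2 hn)) hv)
  exact tendsto_nhds_unique (h1.congr' h2) tendsto_const_nhds

lemma gsLim_norm (f : ℕ → E) (t : E) :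
    Tendsto (fun n => ‖t - gsProj f n t‖) atTop (nhds ‖t - gsLim f t‖) :=
  (tendsto_const_nhds.sub (gsLim_tendsto f t)).norm

set_option linter.unusedSectionVars false in
/-- locality of Gram-Schmidt -/
lemma gramSchmidt_congr_Iic (f g : ℕ → E) :
    ∀ j, (∀ i ≤ j, f i = g i) → gramSchmidt ℂ f j = gramSchmidt ℂ g j := by
  intro j
  induction j using Nat.strong_induction_on with
  | _ j ih =>
    intro hfg
    rw [gramSchmidt_def, gramSchmidt_def]
    rw [hfg j le_rfl]
    congr 1
    refine Finset.sum_congr rfl fun i hi => ?_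
    rw [Finset.mem_Iio] at hi
    rw [ih i hi (fun k hk => hfg k (hk.trans hi.le))]

set_option linter.unusedSectionVars false in
lemma gsProj_congr_Iic (f g : ℕ → E) (n : ℕ) (t : E) (hfg : ∀ i ≤ n, f i = g i) :
    gsProj f n t = gsProj g n t := by
  refine Finset.sum_congr rfl fun j hj => ?_
  rw [Finset.mem_Iic] at hj
  rw [gramSchmidt_congr_Iic f g j (fun i hi => hfg i (hi.trans hj))]

section Meas

variable {α : Type*} [MeasurableSpace α] [MeasurableSpace E] [BorelSpace E]
  [SecondCountableTopology E]

set_option linter.unusedSectionVars false in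
lemma measurable_gramSchmidt11 (f : ℕ → α → E) (hf : ∀ i, Measurable (f i)) :
    ∀ j, Measurable fun a => gramSchmidt ℂ (fun i => f i a) j := by
  intro j
  induction j using Nat.strong_induction_on with
  | _ j ih =>
    have heq : (fun a => gramSchmidt ℂ (fun i => f i a) j)
        = fun a => f j a - ∑ i ∈ Finset.Iio j,
          ((⟪gramSchmidt ℂ (fun i => f i a) i, f j a⟫ /
            (‖gramSchmidt ℂ (fun i => f i a) i‖ : ℂ) ^ 2) •
              gramSchmidt ℂ (fun i => f i a) i) := by
      funext a
      rw [gramSchmidt_def]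
      congr 1
      refine Finset.sum_congr rfl fun i _ => ?_
      rw [starProjection_singleton]
      norm_cast
    rw [heq]
    refine (hf j).sub (Finset.measurable_sum _ fun i hi => ?_)
    rw [Finset.mem_Iio] at hi
    have hgi := ih i hi
    exact Measurable.smul ((hgi.inner (hf j)).div
      (((Complex.measurable_ofReal.comp (measurable_norm.comp hgi))).pow_const 2)) hgi

set_option linter.unusedSectionVars false in
lemma measurable_gsProj11 (f : ℕ → α → E) (hf : ∀ i, Measurable (f i)) (n : ℕ) (t : E) :
    Measurable fun a => gsProj (fun i => f i a) n t := by
  refine Finset.measurable_sum _ fun j _ => ?_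
  have hgj := measurable_gramSchmidt11 f hf j
  exact Measurable.smul ((hgj.inner_const).div
    (((Complex.measurable_ofReal.comp (measurable_norm.comp hgj))).pow_const 2)) hgj

end Meas

end Aux11

open MeasureTheory Filter Finset Submodule

noncomputable section Aux11b

variable {H : Type*} [NormedAddCommGroup H] [InnerProductSpace ℂ H]
    [MeasurableSpace H] [BorelSpace H]
    {Ω : Type*} [MeasurableSpace Ω]
    {P : Measure Ω} [IsProbabilityMeasure P]

lemma map_tuple11 (X : ℕ → Ω → H) (hmeas : ∀ n, Measurable (X n))
    (μ : Measure H) (hdist : ∀ n, Measure.map (X n) P = μ)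
    (hindep : ProbabilityTheory.iIndepFun X P)
    (k m : ℕ) :
    Measure.map (fun ω (i : Fin m) => X (k + i) ω) P = Measure.pi (fun _ => μ) := by
  have hmt : Measurable (fun ω (i : Fin m) => X (k + i) ω) :=
    measurable_pi_lambda _ fun i => hmeas _
  haveI : IsProbabilityMeasure μ :=
    (hdist 0) ▸ Measure.isProbabilityMeasure_map (hmeas 0).aemeasurable
  refine (Measure.pi_eq fun s hs => ?_).symm
  rw [Measure.map_apply hmt (MeasurableSet.univ_pi fun i => hs i)]
  set sets : ℕ → Set H := fun j =>
    if h : j - k < m ∧ k ≤ j then s ⟨j - k, h.1⟩ else Set.univ with hsets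
  have hsets_eq : ∀ i : Fin m, sets (k + i) = s i := by
    intro i
    have h1 : (k + (i : ℕ)) - k = (i : ℕ) := by omega
    have h2 : (k + (i : ℕ)) - k < m ∧ k ≤ k + (i : ℕ) := ⟨by rw [h1]; exact i.2, Nat.le_add_right _ _⟩
    rw [hsets]
    simp only [dif_pos h2]
    congr 1
    ext
    simp [h1]
  set S : Finset ℕ := Finset.image (fun i : Fin m => k + (i : ℕ)) Finset.univ with hS
  have hinj : ∀ x ∈ Finset.univ, ∀ y ∈ Finset.univ,
      (fun i : Fin m => k + (i : ℕ)) x = (fun i : Fin m => k + (i : ℕ)) y → x = y := by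
    intro x _ y _ hxy
    exact Fin.ext (Nat.add_left_cancel hxy)
  have hpre : (fun ω (i : Fin m) => X (k + i) ω) ⁻¹' (Set.pi Set.univ s)
      = ⋂ i ∈ S, X i ⁻¹' sets i := by
    ext ω
    simp only [Set.mem_preimage, Set.mem_pi, Set.mem_univ, forall_true_left, Set.mem_iInter,
      hS, Finset.mem_image, Finset.mem_univ, true_and]
    constructor
    · rintro hω j ⟨i, rfl⟩
      rw [hsets_eq i]; exact hω i
    · intro hω i
      have := hω (k + i) ⟨i, rfl⟩
      rwa [hsets_eq i] at this
  rw [hpre]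
  have hmeas_sets : ∀ i, i ∈ S → MeasurableSet (sets i) := by
    intro j _
    rw [hsets]
    by_cases h : j - k < m ∧ k ≤ j
    · simp only [dif_pos h]; exact hs _
    · simp only [dif_neg h]; exact MeasurableSet.univ
  rw [hindep.measure_inter_preimage_eq_mul S hmeas_sets]
  rw [hS, Finset.prod_image hinj]
  refine Finset.prod_congr rfl fun i _ => ?_
  rw [hsets_eq i, ← hdist (k + i), Measure.map_apply (hmeas _) (hs i)]

end Aux11b

open MeasureTheory Filter Finset Submodule
set_option maxHeartbeats 1000000

section KeyPart

variable {H : Type*} [NormedAddCommGroup H] [InnerProductSpace ℂ H] [CompleteSpace H]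
    [TopologicalSpace.SeparableSpace H]
    [MeasurableSpace H] [BorelSpace H]
    {Ω : Type*} [MeasurableSpace Ω]
    {P : Measure Ω} [IsProbabilityMeasure P]

local notation "⟪" x ", " y "⟫" => @inner ℂ _ _ x y

set_option linter.unusedSectionVars false in
lemma key11 (X : ℕ → Ω → H) (hmeas : ∀ n, Measurable (X n))
    (μ : Measure H) (hdist : ∀ n, Measure.map (X n) P = μ)
    (hindep : ProbabilityTheory.iIndepFun X P)
    (hμ : ∀ g : H, g ≠ 0 → μ {x : H | (inner ℂ g x : ℂ) = 0} < 1)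
    (t : H) :
    ∀ᵐ ω ∂P, Tendsto (fun n => ‖t - gsProj (fun i => X i ω) n t‖) atTop (nhds 0) := by
  haveI : SecondCountableTopology H := UniformSpace.secondCountable_of_separable H
  haveI : IsProbabilityMeasure μ :=
    (hdist 0) ▸ Measure.isProbabilityMeasure_map (hmeas 0).aemeasurable
  -- the two residual-distance sequences
  set D : ℕ → ℕ → Ω → ℝ :=
    fun k n ω => ‖t - gsProj (fun i => X (k + i) ω) n t‖ with hD
  set d : ℕ → Ω → ℝ := fun k ω => ⨅ n, D k n ω with hd
  have hDanti : ∀ k ω, Antitone (fun n => D k n ω) := fun k ω m n hmn =>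
    gsProj_norm_anti _ t hmn
  have hDnonneg : ∀ k n ω, 0 ≤ D k n ω := fun k n ω => norm_nonneg _
  have hDbdd : ∀ k ω, BddBelow (Set.range fun n => D k n ω) :=
    fun k ω => ⟨0, by rintro _ ⟨n, rfl⟩; exact hDnonneg k n ω⟩
  have hDle : ∀ k n ω, D k n ω ≤ ‖t‖ := by
    intro k n ω
    have := (gsProj_min (fun i => X (k + i) ω) n t (Submodule.zero_mem _)).1
    simpa using this
  have hdtend : ∀ k ω, Tendsto (fun n => D k n ω) atTop (nhds (d k ω)) :=
    fun k ω => tendsto_atTop_ciInf (hDanti k ω) (hDbdd k ω)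
  have hDmeas : ∀ k n, Measurable (D k n) := by
    intro k n
    exact (measurable_const.sub (measurable_gsProj11 (fun i => X (k + i))
      (fun i => hmeas _) n t)).norm
  have hdmeas : ∀ k, Measurable (d k) := fun k => Measurable.iInf fun n => hDmeas k n
  -- shifts compare
  have hshift : ∀ n ω, D 0 (n + 1) ω ≤ D 1 n ω := by
    intro n ω
    have hmem : gsProj (fun i => X (1 + i) ω) n t
        ∈ span ℂ ((fun i => X (0 + i) ω) '' Set.Iic (n + 1)) := by
      refine Submodule.span_mono ?_ (gsProj_mem (fun i => X (1 + i) ω) n t)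
      rintro _ ⟨i, hi, rfl⟩
      refine ⟨1 + i, ?_, ?_⟩
      · simp only [Set.mem_Iic] at hi ⊢; omega
      · show X (0 + (1 + i)) ω = X (1 + i) ω
        rw [Nat.zero_add]
    exact (gsProj_min _ _ t hmem).1
  have hd01 : ∀ ω, d 0 ω ≤ d 1 ω := by
    intro ω
    refine le_ciInf fun n => ?_
    exact (ciInf_le (hDbdd 0 ω) (n + 1)).trans (hshift n ω)
  -- equal expectations at each level
  have hint_eq : ∀ n : ℕ, ∫ ω, D 0 n ω ∂P = ∫ ω, D 1 n ω ∂P := by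
    intro n
    set ext : (Fin (n + 1) → H) → (ℕ → H) := fun x i => if h : i < n + 1 then x ⟨i, h⟩ else 0
      with hext
    set G : (Fin (n + 1) → H) → ℝ := fun x => ‖t - gsProj (ext x) n t‖ with hG
    have hGmeas : Measurable G := by
      refine (measurable_const.sub (measurable_gsProj11 (fun i a => ext a i) ?_ n t)).norm
      intro i
      by_cases h : i < n + 1
      · simp only [hext, dif_pos h]; exact measurable_pi_apply _
      · simp only [hext, dif_neg h]; exact measurable_const
    have hDG : ∀ k ω, D k n ω = G (fun i : Fin (n + 1) => X (k + i) ω) := by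
      intro k ω
      rw [hG, hD]
      simp only []
      congr 1
      rw [gsProj_congr_Iic (fun i => X (k + i) ω) (ext fun i : Fin (n + 1) => X (k + i) ω) n t]
      intro i hi
      have h : i < n + 1 := Nat.lt_succ_of_le hi
      simp [hext, h, hi]
    have hcv : ∀ k : ℕ, ∫ ω, D k n ω ∂P = ∫ x, G x ∂(Measure.pi fun _ : Fin (n + 1) => μ) := by
      intro k
      rw [← map_tuple11 X hmeas μ hdist hindep k (n + 1)]
      rw [integral_map (by exact (measurable_pi_lambda _ fun i => hmeas _).aemeasurable)
        hGmeas.aestronglyMeasurable]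
      simp_rw [← hDG k]
    rw [hcv 0, hcv 1]
  -- integrability
  have hInt : ∀ (f : Ω → ℝ), Measurable f → (∀ ω, |f ω| ≤ ‖t‖) → Integrable f P := by
    intro f hf hb
    refine ⟨hf.aestronglyMeasurable, ?_⟩
    refine HasFiniteIntegral.of_bounded (C := ‖t‖) ?_
    filter_upwards with ω
    simpa [Real.norm_eq_abs] using hb ω
  have hdnonneg : ∀ k ω, 0 ≤ d k ω := fun k ω => le_ciInf fun n => hDnonneg k n ω
  have hdle : ∀ k ω, d k ω ≤ ‖t‖ := fun k ω => (ciInf_le (hDbdd k ω) 0).trans (hDle k 0 ω)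
  have hIntd : ∀ k, Integrable (d k) P := fun k =>
    hInt (d k) (hdmeas k) fun ω => by rw [abs_of_nonneg (hdnonneg k ω)]; exact hdle k ω
  -- limits of integrals
  have hitend : ∀ k : ℕ, Tendsto (fun n => ∫ ω, D k n ω ∂P) atTop (nhds (∫ ω, d k ω ∂P)) := by
    intro k
    refine tendsto_integral_of_dominated_convergence (fun _ => ‖t‖)
      (fun n => (hDmeas k n).aestronglyMeasurable) (integrable_const _) ?_ ?_
    · intro n
      filter_upwards with ω
      rw [Real.norm_eq_abs, abs_of_nonneg (hDnonneg k n ω)]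
      exact hDle k n ω
    · filter_upwards with ω
      exact hdtend k ω
  have hint_d : ∫ ω, d 0 ω ∂P = ∫ ω, d 1 ω ∂P := by
    refine tendsto_nhds_unique ?_ (hitend 1)
    exact (hitend 0).congr fun n => hint_eq n
  -- a.e. equality of d 0 and d 1
  have hae_d : ∀ᵐ ω ∂P, d 0 ω = d 1 ω := by
    have h0 : ∫ ω, (d 1 ω - d 0 ω) ∂P = 0 := by
      rw [integral_sub (hIntd 1) (hIntd 0), hint_d, sub_self]
    have hnn : 0 ≤ fun ω => d 1 ω - d 0 ω := fun ω => sub_nonneg.2 (hd01 ω)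
    have := (integral_eq_zero_iff_of_nonneg hnn ((hIntd 1).sub (hIntd 0))).mp h0
    filter_upwards [this] with ω hω
    have : d 1 ω - d 0 ω = 0 := hω
    linarith
  -- limit projections
  set p : ℕ → Ω → H := fun k ω => gsLim (fun i => X (k + i) ω) t with hp
  have hptend : ∀ k ω, Tendsto (fun n => gsProj (fun i => X (k + i) ω) n t) atTop
      (nhds (p k ω)) := fun k ω => gsLim_tendsto _ t
  have hpnorm : ∀ k ω, ‖t - p k ω‖ = d k ω := fun k ω =>
    tendsto_nhds_unique (gsLim_norm _ t) (hdtend k ω)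
  have horth0 : ∀ (ω : Ω) (m : ℕ) (v : H), v ∈ span ℂ ((fun i => X (0 + i) ω) '' Set.Iic m) →
      ⟪v, t - p 0 ω⟫ = 0 := fun ω m v hv => gsLim_orth _ t hv
  have hdiff : ∀ ω, ⟪p 0 ω - p 1 ω, t - p 0 ω⟫ = 0 := by
    intro ω
    have h1 : Tendsto (fun n => gsProj (fun i => X (0 + i) ω) n t
        - gsProj (fun i => X (1 + i) ω) n t) atTop (nhds (p 0 ω - p 1 ω)) :=
      (hptend 0 ω).sub (hptend 1 ω)
    have h2 : Tendsto (fun n => ⟪gsProj (fun i => X (0 + i) ω) n t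
        - gsProj (fun i => X (1 + i) ω) n t, t - p 0 ω⟫) atTop
        (nhds ⟪p 0 ω - p 1 ω, t - p 0 ω⟫) := h1.inner tendsto_const_nhds
    have hz : ∀ n : ℕ, ⟪gsProj (fun i => X (0 + i) ω) n t
        - gsProj (fun i => X (1 + i) ω) n t, t - p 0 ω⟫ = (0 : ℂ) := by
      intro n
      refine horth0 ω (n + 1) _ (Submodule.sub_mem _ ?_ ?_)
      · exact Submodule.span_mono (Set.image_mono (Set.Iic_subset_Iic.2 (Nat.le_succ n)))
          (gsProj_mem _ n t)
      · refine Submodule.span_mono ?_ (gsProj_mem (fun i => X (1 + i) ω) n t)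
        rintro _ ⟨i, hi, rfl⟩
        refine ⟨1 + i, ?_, ?_⟩
        · simp only [Set.mem_Iic] at hi ⊢; omega
        · show X (0 + (1 + i)) ω = X (1 + i) ω
          rw [Nat.zero_add]
    exact tendsto_nhds_unique (h2.congr hz) tendsto_const_nhds
  have hpyth : ∀ ω, ‖t - p 1 ω‖ ^ 2 = ‖t - p 0 ω‖ ^ 2 + ‖p 0 ω - p 1 ω‖ ^ 2 := by
    intro ω
    have heq : t - p 1 ω = (t - p 0 ω) + (p 0 ω - p 1 ω) := by abel
    rw [heq, pyth11 _ _ (inner_eq_zero_symm.mp (hdiff ω))]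
  have hae_p : ∀ᵐ ω ∂P, p 0 ω = p 1 ω := by
    filter_upwards [hae_d] with ω hω
    have h1 := hpyth ω
    rw [hpnorm 0 ω, hpnorm 1 ω, ← hω] at h1
    have h2 : ‖p 0 ω - p 1 ω‖ ^ 2 = 0 := by linarith
    have h3 := sq_eq_zero_iff.mp h2
    rwa [norm_eq_zero, sub_eq_zero] at h3
  -- measurability and independence of the tail limit
  have hkey : Measurable (fun ω => gsLim (fun i => X (1 + i) ω) t) ∧
      ProbabilityTheory.IndepFun (fun ω => gsLim (fun i => X (1 + i) ω) t) (X 0) P := by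
    have hMle := iSup₂_le (f := fun (n : ℕ) (_ : n ∈ ({0}ᶜ : Set ℕ)) =>
      MeasurableSpace.comap (X n) inferInstance) fun i _ => (hmeas i).comap_le
    have hiI := (ProbabilityTheory.iIndepFun_iff_iIndep _ X P).mp hindep
    have hcompl := ProbabilityTheory.indep_biSup_compl
      (fun n => (hmeas n).comap_le) hiI ({0}ᶜ : Set ℕ)
    rw [compl_compl] at hcompl
    have hsingle : (⨆ n ∈ ({0} : Set ℕ), MeasurableSpace.comap (X n) inferInstance)
        = MeasurableSpace.comap (X 0) inferInstance := by simp
    rw [hsingle] at hcompl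
    set M : MeasurableSpace Ω :=
      ⨆ n ∈ ({0}ᶜ : Set ℕ), MeasurableSpace.comap (X n) inferInstance with hM
    have hXM : ∀ i : ℕ, Measurable[M] (X (1 + i)) := by
      intro i
      have hle : MeasurableSpace.comap (X (1 + i)) inferInstance ≤ M := by
        rw [hM]
        exact le_biSup (fun n => MeasurableSpace.comap (X n) inferInstance) (by simp)
      exact fun u hu => hle _ (MeasurableSpace.measurableSet_comap.2 ⟨u, hu, rfl⟩)
    have hq1M : ∀ n, Measurable[M] (fun ω => gsProj (fun i => X (1 + i) ω) n t) :=
      fun n => measurable_gsProj11 (fun i => X (1 + i)) hXM n t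
    have hp1M : Measurable[M] (fun ω => gsLim (fun i => X (1 + i) ω) t) := by
      refine measurable_of_tendsto_metrizable hq1M ?_
      rw [tendsto_pi_nhds]
      exact fun ω => gsLim_tendsto _ t
    constructor
    · exact hp1M.mono hMle le_rfl
    · rw [ProbabilityTheory.IndepFun_iff_Indep]
      exact ProbabilityTheory.indep_of_indep_of_le_left hcompl hp1M.comap_le
  obtain ⟨hplimmeas, hplimindep⟩ := hkey
  set g : Ω → H := fun ω => t - p 1 ω with hg
  have hgmeas : Measurable g := measurable_const.sub hplimmeas
  have hIndep : ProbabilityTheory.IndepFun g (X 0) P :=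
    hplimindep.comp (measurable_const.sub measurable_id) measurable_id
  -- Fubini argument
  have hmap : Measure.map (fun ω => (g ω, X 0 ω)) P = (Measure.map g P).prod μ := by
    rw [← hdist 0]
    exact (ProbabilityTheory.indepFun_iff_map_prod_eq_prod_map_map hgmeas.aemeasurable
      (hmeas 0).aemeasurable).mp hIndep
  set sOrth : Set (H × H) := {q : H × H | ⟪q.1, q.2⟫ = 0} with hsOrth
  have hsmeas : MeasurableSet sOrth :=
    (isClosed_eq continuous_inner continuous_const).measurableSet
  have hinner0 : ∀ᵐ ω ∂P, ⟪g ω, X 0 ω⟫ = 0 := by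
    filter_upwards [hae_p] with ω hω
    have h1 : ⟪X 0 ω, t - p 0 ω⟫ = 0 :=
      horth0 ω 0 _ (Submodule.subset_span ⟨0, Set.mem_Iic.2 le_rfl, rfl⟩)
    have h2 : g ω = t - p 0 ω := by rw [hg]; simp only [← hω]
    rw [h2]
    exact inner_eq_zero_symm.mp h1
  have hsetmeas : MeasurableSet {ω | ⟪g ω, X 0 ω⟫ = 0} := by
    have : {ω | ⟪g ω, X 0 ω⟫ = 0} = (fun ω => (g ω, X 0 ω)) ⁻¹' sOrth := rfl
    rw [this]
    exact (hgmeas.prodMk (hmeas 0)) hsmeas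
  have hP1 : P {ω | ⟪g ω, X 0 ω⟫ = 0} = 1 := by
    rw [← prob_compl_eq_zero_iff hsetmeas]
    have : {ω | ⟪g ω, X 0 ω⟫ = 0}ᶜ = {ω | ¬ (⟪g ω, X 0 ω⟫ = 0)} := rfl
    rw [this]
    exact ae_iff.mp hinner0
  set ν : Measure H := Measure.map g P with hν
  haveI : IsProbabilityMeasure ν := Measure.isProbabilityMeasure_map hgmeas.aemeasurable
  have hprodapp : ∫⁻ a, μ (Prod.mk a ⁻¹' sOrth) ∂ν = 1 := by
    rw [← Measure.prod_apply hsmeas, ← hmap,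
      Measure.map_apply (hgmeas.prodMk (hmeas 0)) hsmeas]
    exact hP1
  have hφmeas : Measurable fun a : H => μ (Prod.mk a ⁻¹' sOrth) :=
    measurable_measure_prodMk_left hsmeas
  have hφle : ∀ a : H, μ (Prod.mk a ⁻¹' sOrth) ≤ 1 := fun a => prob_le_one
  have hsub : ∫⁻ a, (1 - μ (Prod.mk a ⁻¹' sOrth)) ∂ν = 0 := by
    rw [lintegral_sub hφmeas (by rw [hprodapp]; exact ENNReal.one_ne_top)
      (Filter.Eventually.of_forall hφle), lintegral_one, measure_univ, hprodapp, tsub_self]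
  have hae1 : ∀ᵐ a ∂ν, (1 : ENNReal) - μ (Prod.mk a ⁻¹' sOrth) = 0 :=
    (lintegral_eq_zero_iff (measurable_const.sub hφmeas)).mp hsub
  have hae2 : ∀ᵐ a ∂ν, a = 0 := by
    filter_upwards [hae1] with a ha
    by_contra hne
    have h1le : (1 : ENNReal) ≤ μ (Prod.mk a ⁻¹' sOrth) := tsub_eq_zero_iff_le.mp ha
    have hlt := hμ a hne
    have heq : Prod.mk a ⁻¹' sOrth = {x : H | (inner ℂ a x : ℂ) = 0} := rfl
    rw [heq] at h1le
    exact absurd h1le (not_le.mpr hlt)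
  have hgz : ∀ᵐ ω ∂P, g ω = 0 := by
    have hcz : ν {a : H | ¬ (a = 0)} = 0 := ae_iff.mp hae2
    have hmeasset : MeasurableSet {a : H | ¬ (a = 0)} := by
      have : {a : H | ¬ (a = 0)} = ({0} : Set H)ᶜ := rfl
      rw [this]
      exact (measurableSet_singleton 0).compl
    rw [hν, Measure.map_apply hgmeas hmeasset] at hcz
    exact ae_iff.mpr hcz
  -- conclusion
  filter_upwards [hae_d, hgz] with ω h1 h2
  have hd1 : d 1 ω = 0 := by
    rw [← hpnorm 1 ω]
    have : t - p 1 ω = 0 := h2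
    rw [this, norm_zero]
  have hd0 : d 0 ω = 0 := by rw [h1, hd1]
  have htd := hdtend 0 ω
  rw [hd0] at htd
  have hXe : (fun i => X (0 + i) ω) = fun i => X i ω := by
    funext i
    rw [Nat.zero_add]
  simp only [hD, hXe] at htd
  exact htd

end KeyPart

open MeasureTheory Filter

/-- for an i.i.d. sequence of nondegenerate random vectors `X n`, the orthogonal
projections `Pn n ω` onto `span {X 0 ω, …, X n ω}` converge almost surely to the identity in
the strong operator topology. -/
theorem stmt_11
    {H : Type*} [NormedAddCommGroup H] [InnerProductSpace ℂ H] [CompleteSpace H]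
    [TopologicalSpace.SeparableSpace H]
    [MeasurableSpace H] [BorelSpace H]
    {Ω : Type*} [MeasurableSpace Ω]
    (P : Measure Ω) [IsProbabilityMeasure P]
    (X : ℕ → Ω → H)
    (hmeas : ∀ n, Measurable (X n))
    (μ : Measure H)
    (hdist : ∀ n, Measure.map (X n) P = μ)
    (hindep : ProbabilityTheory.iIndepFun X P)
    (hμ : ∀ g : H, g ≠ 0 → μ {x : H | (inner ℂ g x : ℂ) = 0} < 1)
    (Pn : ℕ → Ω → H →L[ℂ] H)
    (hPn_mem : ∀ n ω (x : H),
      Pn n ω x ∈ Submodule.span ℂ ((fun i => X i ω) '' Set.Iic n))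
    (hPn_fix : ∀ n ω, ∀ x ∈ Submodule.span ℂ ((fun i => X i ω) '' Set.Iic n),
      Pn n ω x = x)
    (hPn_sa : ∀ n ω, ContinuousLinearMap.adjoint (Pn n ω) = Pn n ω) :
    ∀ᵐ ω ∂P, ∀ h : H, Tendsto (fun n => Pn n ω h) atTop (nhds h) := by
  haveI : SecondCountableTopology H := UniformSpace.secondCountable_of_separable H
  -- basic facts about the projections Pn
  have hPn_inner : ∀ n ω (x v : H),
      v ∈ Submodule.span ℂ ((fun i => X i ω) '' Set.Iic n) →
      (inner ℂ v (x - Pn n ω x) : ℂ) = 0 := by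
    intro n ω x v hv
    rw [inner_sub_right]
    have h1 : (inner ℂ v (Pn n ω x) : ℂ) = inner ℂ v x := by
      calc (inner ℂ v (Pn n ω x) : ℂ)
          = inner ℂ (ContinuousLinearMap.adjoint (Pn n ω) v) x :=
            (ContinuousLinearMap.adjoint_inner_left (Pn n ω) x v).symm
        _ = inner ℂ (Pn n ω v) x := by rw [hPn_sa n ω]
        _ = inner ℂ v x := by rw [hPn_fix n ω v hv]
    rw [h1, sub_self]
  have hPn_min : ∀ n ω (x v : H),
      v ∈ Submodule.span ℂ ((fun i => X i ω) '' Set.Iic n) →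
      ‖x - Pn n ω x‖ ≤ ‖x - v‖ := by
    intro n ω x v hv
    have horth : (inner ℂ (x - Pn n ω x) (Pn n ω x - v) : ℂ) = 0 :=
      inner_eq_zero_symm.mp (hPn_inner n ω x _
        (Submodule.sub_mem _ (hPn_mem n ω x) hv))
    have heq : x - v = (x - Pn n ω x) + (Pn n ω x - v) := by abel
    have hsq : ‖x - v‖ ^ 2 = ‖x - Pn n ω x‖ ^ 2 + ‖Pn n ω x - v‖ ^ 2 := by
      rw [heq, pyth11 _ _ horth]
    nlinarith [norm_nonneg (x - Pn n ω x), norm_nonneg (x - v),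
      sq_nonneg ‖Pn n ω x - v‖]
  have hPn_contr : ∀ n ω (x : H), ‖Pn n ω x‖ ≤ ‖x‖ := by
    intro n ω x
    have h1 : (inner ℂ (Pn n ω x) (Pn n ω x) : ℂ) = inner ℂ (Pn n ω x) x := by
      calc (inner ℂ (Pn n ω x) (Pn n ω x) : ℂ)
          = inner ℂ (ContinuousLinearMap.adjoint (Pn n ω) (Pn n ω x)) x :=
            (ContinuousLinearMap.adjoint_inner_left (Pn n ω) x (Pn n ω x)).symm
        _ = inner ℂ (Pn n ω (Pn n ω x)) x := by rw [hPn_sa n ω]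
        _ = inner ℂ (Pn n ω x) x := by rw [hPn_fix n ω _ (hPn_mem n ω x)]
    have h3 : ‖(inner ℂ (Pn n ω x) (Pn n ω x) : ℂ)‖ = ‖Pn n ω x‖ ^ 2 := by
      rw [@inner_self_eq_norm_sq_to_K ℂ]
      rw [norm_pow]
      simp
    have h4 : ‖Pn n ω x‖ ^ 2 ≤ ‖Pn n ω x‖ * ‖x‖ := by
      rw [← h3, h1]
      exact norm_inner_le_norm _ _
    nlinarith [norm_nonneg (Pn n ω x), norm_nonneg x]
  -- dense sequence
  have hT : DenseRange (TopologicalSpace.denseSeq H) := TopologicalSpace.denseRange_denseSeq H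
  set u : ℕ → H := TopologicalSpace.denseSeq H with hu
  have hkeyall : ∀ᵐ ω ∂P, ∀ j : ℕ,
      Tendsto (fun n => ‖u j - gsProj (fun i => X i ω) n (u j)‖) atTop (nhds 0) := by
    rw [ae_all_iff]
    exact fun j => key11 X hmeas μ hdist hindep hμ (u j)
  filter_upwards [hkeyall] with ω hω
  intro h
  rw [Metric.tendsto_atTop]
  intro ε hε
  obtain ⟨j, hj⟩ : ∃ j, dist h (u j) < ε / 4 :=
    Metric.denseRange_iff.mp hT h (ε / 4) (by positivity)
  obtain ⟨N, hN⟩ := (Metric.tendsto_atTop.mp (hω j)) (ε / 4) (by positivity)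
  refine ⟨N, fun n hn => ?_⟩
  have hv : gsProj (fun i => X i ω) N (u j)
      ∈ Submodule.span ℂ ((fun i => X i ω) '' Set.Iic n) :=
    Submodule.span_mono (Set.image_mono (Set.Iic_subset_Iic.2 hn))
      (gsProj_mem _ N (u j))
  have h1 : ‖u j - Pn n ω (u j)‖ ≤ ‖u j - gsProj (fun i => X i ω) N (u j)‖ :=
    hPn_min n ω (u j) _ hv
  have h2 : ‖u j - gsProj (fun i => X i ω) N (u j)‖ < ε / 4 := by
    have := hN N le_rfl
    rw [Real.dist_eq, sub_zero, abs_of_nonneg (norm_nonneg _)] at this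
    exact this
  have h4 : ‖Pn n ω h - Pn n ω (u j)‖ ≤ ‖h - u j‖ := by
    rw [← map_sub]
    exact hPn_contr n ω _
  have hdist1 : ‖h - u j‖ < ε / 4 := by rw [← dist_eq_norm]; exact hj
  have h3 : ‖Pn n ω h - h‖
      ≤ ‖Pn n ω h - Pn n ω (u j)‖ + ‖Pn n ω (u j) - u j‖ + ‖u j - h‖ := by
    calc ‖Pn n ω h - h‖
        = ‖(Pn n ω h - Pn n ω (u j)) + ((Pn n ω (u j) - u j) + (u j - h))‖ := by
          congr 1; abel
      _ ≤ ‖Pn n ω h - Pn n ω (u j)‖ + ‖(Pn n ω (u j) - u j) + (u j - h)‖ := norm_add_le _ _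
      _ ≤ ‖Pn n ω h - Pn n ω (u j)‖ + (‖Pn n ω (u j) - u j‖ + ‖u j - h‖) := by
          exact add_le_add le_rfl (norm_add_le _ _)
      _ = _ := by ring
  rw [dist_eq_norm]
  have h5 : ‖Pn n ω (u j) - u j‖ = ‖u j - Pn n ω (u j)‖ := norm_sub_rev _ _
  have h6 : ‖u j - h‖ = ‖h - u j‖ := norm_sub_rev _ _
  have := h3
  rw [h5, h6] at this
  have h7 := lt_of_le_of_lt h1 h2
  linarith
end

section
/- Let (P_n) be a sequence of orthogonal projections on H with P_n h → h for every h ∈ H, and for each n let C_n : H →L[ℂ] H be a bounded operator with ⟪C_n h, h⟫ = ∑'_γ w γ * ‖P_n (S γ h)‖² for all h ∈ H (the column operator compressed through P_n). Then ‖C_n‖ ≤ ‖C‖ for every n, and ‖C_n‖ → ‖C‖ = ∑'_γ w γ * ‖z γ‖² as n → ∞. -/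
open Filter
open scoped NNReal

section Aux

variable {H : Type*} [NormedAddCommGroup H] [InnerProductSpace ℂ H]

private lemma re_inner_self' (v : H) : (inner ℂ v v : ℂ).re = ‖v‖ ^ 2 := by
  rw [inner_self_eq_norm_sq_to_K]; norm_cast

private lemma re_inner_le_norm' (x y : H) : (inner ℂ x y : ℂ).re ≤ ‖x‖ * ‖y‖ := by
  simpa using re_inner_le_norm (𝕜 := ℂ) x y

/-- norm of a finite sum of pairwise orthogonal vectors. -/
private lemma orth_norm_sum {ι : Type*} (v : ι → H)
    (hv : ∀ i j, i ≠ j → (inner ℂ (v i) (v j) : ℂ) = 0) (c : ι → ℂ) (s : Finset ι) :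
    ‖∑ i ∈ s, c i • v i‖ ^ 2 = ∑ i ∈ s, ‖c i‖ ^ 2 * ‖v i‖ ^ 2 := by
  have h : (inner ℂ (∑ i ∈ s, c i • v i) (∑ i ∈ s, c i • v i) : ℂ)
      = ((∑ i ∈ s, ‖c i‖ ^ 2 * ‖v i‖ ^ 2 : ℝ) : ℂ) := by
    rw [sum_inner]
    push_cast
    refine Finset.sum_congr rfl fun i hi => ?_
    rw [inner_sum, Finset.sum_eq_single i]
    · rw [inner_smul_left, inner_smul_right, inner_self_eq_norm_sq_to_K, ← mul_assoc,
        RCLike.conj_mul]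
      norm_cast
    · intro j hj hji
      rw [inner_smul_left, inner_smul_right, hv i j (Ne.symm hji), mul_zero, mul_zero]
    · intro hnot
      exact absurd hi hnot
  rw [inner_self_eq_norm_sq_to_K] at h
  exact Complex.ofReal_injective (by push_cast; push_cast at h; exact h)

/-- a symmetric operator whose quadratic form is bounded by `c * ‖x‖²` has norm at most `c`. -/
private lemma sym_norm_le (T : H →L[ℂ] H)
    (hsym : ∀ x y : H, (inner ℂ (T x) y : ℂ) = inner ℂ x (T y))
    {c : ℝ} (hc : 0 ≤ c)
    (hb : ∀ x : H, |(inner ℂ (T x) x : ℂ).re| ≤ c * ‖x‖ ^ 2) : ‖T‖ ≤ c := by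
  refine T.opNorm_le_bound hc fun x => ?_
  rcases eq_or_ne (T x) 0 with h0 | h0
  · simp only [h0, norm_zero]
    positivity
  have hx : x ≠ 0 := by
    intro hx; apply h0; rw [hx, map_zero]
  have hT0 : (0:ℝ) < ‖T x‖ := norm_pos_iff.mpr h0
  have hxpos : (0:ℝ) < ‖x‖ := norm_pos_iff.mpr hx
  set y : H := ((‖x‖ / ‖T x‖ : ℝ) : ℂ) • T x with hy
  have hyn : ‖y‖ = ‖x‖ := by
    rw [hy, norm_smul, Complex.norm_real, Real.norm_eq_abs,
      abs_of_nonneg (by positivity), div_mul_cancel₀ _ hT0.ne']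
  have hre : (inner ℂ (T x) y : ℂ).re = ‖x‖ * ‖T x‖ := by
    rw [hy, inner_smul_right]
    have h2 : ((((‖x‖ / ‖T x‖ : ℝ) : ℂ)) * (inner ℂ (T x) (T x) : ℂ)).re
        = (‖x‖ / ‖T x‖) * (inner ℂ (T x) (T x) : ℂ).re := by
      simp [Complex.mul_re, Complex.ofReal_re, Complex.ofReal_im]
    rw [h2, re_inner_self']
    field_simp
  have hsymre : (inner ℂ (T y) x : ℂ).re = (inner ℂ (T x) y : ℂ).re := by
    rw [hsym y x, ← inner_conj_symm (T x) y]
    exact Complex.conj_re _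
  have hpol : 4 * (inner ℂ (T x) y : ℂ).re
      = (inner ℂ (T (x + y)) (x + y) : ℂ).re - (inner ℂ (T (x - y)) (x - y) : ℂ).re := by
    simp only [map_add, map_sub, inner_add_left, inner_add_right, inner_sub_left,
      inner_sub_right, Complex.add_re, Complex.sub_re]
    linarith [hsymre]
  have b1 : (inner ℂ (T (x + y)) (x + y) : ℂ).re ≤ c * ‖x + y‖ ^ 2 := (abs_le.mp (hb (x + y))).2
  have b2 : -(c * ‖x - y‖ ^ 2) ≤ (inner ℂ (T (x - y)) (x - y) : ℂ).re := (abs_le.mp (hb (x - y))).1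
  have hsum : ‖x + y‖ ^ 2 + ‖x - y‖ ^ 2 = 2 * (‖x‖ ^ 2 + ‖y‖ ^ 2) := by
    simpa [pow_two] using parallelogram_law_with_norm ℂ x y
  have hmul : c * (‖x + y‖ ^ 2 + ‖x - y‖ ^ 2) = 4 * (c * ‖x‖ ^ 2) := by
    rw [hsum, hyn]; ring
  have hkey : 4 * (‖x‖ * ‖T x‖) ≤ 4 * (c * ‖x‖ ^ 2) := by
    rw [← hre]
    nlinarith [hpol, b1, b2, hmul]
  nlinarith [hkey, hxpos]

end Aux

/-- if orthogonal projections `P n` converge strongly to the identity and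
`Cn n` is the column operator compressed through `P n`, then `‖Cn n‖ ≤ ‖C‖` for all `n` and
`‖Cn n‖ → ‖C‖ = ∑' γ, w γ * ‖z γ‖²`. -/
theorem stmt_13
    {H : Type*} [NormedAddCommGroup H] [InnerProductSpace ℂ H] [CompleteSpace H]
    {Γ : Type*} [AddCancelMonoid Γ]
    (z : Γ → H)
    (hz_ne : ∀ α, z α ≠ 0)
    (hz_orth : ∀ α β, α ≠ β → (inner ℂ (z α) (z β) : ℂ) = 0)
    (hz_dense : (Submodule.span ℂ (Set.range z)).topologicalClosure = ⊤)
    (hz0 : ‖z 0‖ = 1)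
    (hcomm : ∀ α β, ‖z (α + β)‖ ≤ ‖z α‖ * ‖z β‖)
    (w : Γ → ℝ≥0)
    (hw : Summable fun γ => (w γ : ℝ) * ‖z γ‖ ^ 2)
    (S : Γ → H →L[ℂ] H) (hS : ∀ γ β, S γ (z β) = z (γ + β))
    (C : H →L[ℂ] H)
    (hC : ∀ h : H, (inner ℂ (C h) h : ℂ)
        = ((∑' γ, (w γ : ℝ) * ‖S γ h‖ ^ 2 : ℝ) : ℂ))
    (P : ℕ → H →L[ℂ] H)
    (hP_idem : ∀ n, P n ∘L P n = P n)
    (hP_sa : ∀ n, ContinuousLinearMap.adjoint (P n) = P n)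
    (hP_tend : ∀ h : H, Tendsto (fun n => P n h) atTop (nhds h))
    (Cn : ℕ → H →L[ℂ] H)
    (hCn : ∀ n, ∀ h : H, (inner ℂ (Cn n h) h : ℂ)
        = ((∑' γ, (w γ : ℝ) * ‖P n (S γ h)‖ ^ 2 : ℝ) : ℂ)) :
    (∀ n, ‖Cn n‖ ≤ ‖C‖) ∧
      Tendsto (fun n => ‖Cn n‖) atTop (nhds ‖C‖) ∧
      ‖C‖ = ∑' γ, (w γ : ℝ) * ‖z γ‖ ^ 2 := by
  set K : ℝ := ∑' γ, (w γ : ℝ) * ‖z γ‖ ^ 2 with hKdef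
  have hK0 : 0 ≤ K := tsum_nonneg fun γ => by positivity
  -- bound on the shifts
  have hSbound : ∀ γ (h : H), ‖S γ h‖ ≤ ‖z γ‖ * ‖h‖ := by
    intro γ
    have hspan : ∀ h ∈ Submodule.span ℂ (Set.range z), ‖S γ h‖ ≤ ‖z γ‖ * ‖h‖ := by
      intro h hh
      obtain ⟨c, rfl⟩ := Finsupp.mem_span_range_iff_exists_finsupp.mp hh
      rw [Finsupp.sum]
      have h1 : ‖∑ i ∈ c.support, c i • z i‖ ^ 2 = ∑ i ∈ c.support, ‖c i‖ ^ 2 * ‖z i‖ ^ 2 :=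
        orth_norm_sum z hz_orth c c.support
      have h2 : S γ (∑ i ∈ c.support, c i • z i) = ∑ i ∈ c.support, c i • z (γ + i) := by
        rw [map_sum]
        exact Finset.sum_congr rfl fun i _ => by rw [map_smul, hS]
      have h3 : ‖∑ i ∈ c.support, c i • z (γ + i)‖ ^ 2
          = ∑ i ∈ c.support, ‖c i‖ ^ 2 * ‖z (γ + i)‖ ^ 2 :=
        orth_norm_sum (fun i => z (γ + i))
          (fun i j hij => hz_orth _ _ (fun hq => hij (add_left_cancel hq))) c c.support
      have h4 : ∑ i ∈ c.support, ‖c i‖ ^ 2 * ‖z (γ + i)‖ ^ 2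
          ≤ ‖z γ‖ ^ 2 * ∑ i ∈ c.support, ‖c i‖ ^ 2 * ‖z i‖ ^ 2 := by
        rw [Finset.mul_sum]
        refine Finset.sum_le_sum fun i _ => ?_
        have hsq : ‖z (γ + i)‖ ^ 2 ≤ ‖z γ‖ ^ 2 * ‖z i‖ ^ 2 := by
          nlinarith [hcomm γ i, norm_nonneg (z (γ + i)), norm_nonneg (z γ), norm_nonneg (z i)]
        nlinarith [hsq, sq_nonneg ‖c i‖]
      have h5 : ‖S γ (∑ i ∈ c.support, c i • z i)‖ ^ 2
          ≤ (‖z γ‖ * ‖∑ i ∈ c.support, c i • z i‖) ^ 2 := by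
        rw [h2, h3, mul_pow, h1]
        exact h4
      exact (pow_le_pow_iff_left₀ (norm_nonneg _) (by positivity) two_ne_zero).mp h5
    intro h
    have hdense : Dense ((Submodule.span ℂ (Set.range z) : Submodule ℂ H) : Set H) :=
      Submodule.dense_iff_topologicalClosure_eq_top.mpr hz_dense
    have hcl : IsClosed {h : H | ‖S γ h‖ ≤ ‖z γ‖ * ‖h‖} :=
      isClosed_le ((S γ).continuous.norm) (continuous_const.mul continuous_norm)
    have hsub : closure ((Submodule.span ℂ (Set.range z) : Submodule ℂ H) : Set H)
        ⊆ {h : H | ‖S γ h‖ ≤ ‖z γ‖ * ‖h‖} :=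
      hcl.closure_subset_iff.mpr fun x hx => hspan x hx
    exact hsub (by rw [hdense.closure_eq]; trivial)
  -- P n is a contraction
  have hPcon : ∀ n (x : H), ‖P n x‖ ≤ ‖x‖ := by
    intro n x
    have hsa : ∀ a b : H, (inner ℂ (P n a) b : ℂ) = inner ℂ a (P n b) := by
      intro a b
      conv_lhs => rw [← hP_sa n]
      exact ContinuousLinearMap.adjoint_inner_left _ _ _
    have hid : P n (P n x) = P n x := by
      have := congrArg (fun (T : H →L[ℂ] H) => T x) (hP_idem n)
      simpa using this
    have h1 : (inner ℂ (P n x) (P n x) : ℂ) = inner ℂ x (P n x) := by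
      rw [hsa x (P n x), hid]
    have h2 : ‖P n x‖ ^ 2 ≤ ‖x‖ * ‖P n x‖ := by
      rw [← re_inner_self' (P n x), h1]
      exact re_inner_le_norm' x (P n x)
    nlinarith [norm_nonneg (P n x), norm_nonneg x]
  -- real parts of the quadratic forms
  have hCre : ∀ h : H, (inner ℂ (C h) h : ℂ).re = ∑' γ, (w γ : ℝ) * ‖S γ h‖ ^ 2 := fun h => by
    rw [hC h]; exact Complex.ofReal_re _
  have hCnre : ∀ n (h : H), (inner ℂ (Cn n h) h : ℂ).re = ∑' γ, (w γ : ℝ) * ‖P n (S γ h)‖ ^ 2 :=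
    fun n h => by rw [hCn n h]; exact Complex.ofReal_re _
  -- symmetry
  have hCsym : ∀ x y : H, (inner ℂ (C x) y : ℂ) = inner ℂ x (C y) := by
    have hs : LinearMap.IsSymmetric (↑C : H →ₗ[ℂ] H) := by
      rw [LinearMap.isSymmetric_iff_inner_map_self_real]
      intro v
      simp only [ContinuousLinearMap.coe_coe]
      rw [hC v]
      exact Complex.conj_ofReal _
    exact fun x y => hs x y
  have hCnsym : ∀ n, ∀ x y : H, (inner ℂ (Cn n x) y : ℂ) = inner ℂ x (Cn n y) := by
    intro n
    have hs : LinearMap.IsSymmetric (↑(Cn n) : H →ₗ[ℂ] H) := by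
      rw [LinearMap.isSymmetric_iff_inner_map_self_real]
      intro v
      simp only [ContinuousLinearMap.coe_coe]
      rw [hCn n v]
      exact Complex.conj_ofReal _
    exact fun x y => hs x y
  -- termwise bounds and summability
  have hterm : ∀ (γ : Γ) (h : H),
      (w γ : ℝ) * ‖S γ h‖ ^ 2 ≤ (w γ : ℝ) * ‖z γ‖ ^ 2 * ‖h‖ ^ 2 := by
    intro γ h
    have h2 : ‖S γ h‖ ^ 2 ≤ ‖z γ‖ ^ 2 * ‖h‖ ^ 2 := by
      nlinarith [hSbound γ h, norm_nonneg (S γ h), norm_nonneg (z γ), norm_nonneg h]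
    calc (w γ : ℝ) * ‖S γ h‖ ^ 2 ≤ (w γ : ℝ) * (‖z γ‖ ^ 2 * ‖h‖ ^ 2) :=
          mul_le_mul_of_nonneg_left h2 (w γ).coe_nonneg
      _ = (w γ : ℝ) * ‖z γ‖ ^ 2 * ‖h‖ ^ 2 := by ring
  have hsum1 : ∀ h : H, Summable fun γ => (w γ : ℝ) * ‖S γ h‖ ^ 2 := by
    intro h
    exact Summable.of_nonneg_of_le (fun γ => by positivity) (fun γ => hterm γ h)
      (hw.mul_right (‖h‖ ^ 2))
  have htermP : ∀ n (γ : Γ) (h : H),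
      (w γ : ℝ) * ‖P n (S γ h)‖ ^ 2 ≤ (w γ : ℝ) * ‖S γ h‖ ^ 2 := by
    intro n γ h
    have h2 : ‖P n (S γ h)‖ ^ 2 ≤ ‖S γ h‖ ^ 2 := by
      nlinarith [hPcon n (S γ h), norm_nonneg (P n (S γ h)), norm_nonneg (S γ h)]
    exact mul_le_mul_of_nonneg_left h2 (w γ).coe_nonneg
  have hsum2 : ∀ n (h : H), Summable fun γ => (w γ : ℝ) * ‖P n (S γ h)‖ ^ 2 := by
    intro n h
    exact Summable.of_nonneg_of_le (fun γ => by positivity) (fun γ => htermP n γ h) (hsum1 h)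
  -- quadratic form bounds
  have hCformbound : ∀ h : H, |(inner ℂ (C h) h : ℂ).re| ≤ K * ‖h‖ ^ 2 := by
    intro h
    rw [hCre h, abs_of_nonneg (tsum_nonneg fun γ => by positivity)]
    calc (∑' γ, (w γ : ℝ) * ‖S γ h‖ ^ 2)
        ≤ ∑' γ, (w γ : ℝ) * ‖z γ‖ ^ 2 * ‖h‖ ^ 2 :=
          Summable.tsum_le_tsum (fun γ => hterm γ h) (hsum1 h) (hw.mul_right (‖h‖ ^ 2))
      _ = K * ‖h‖ ^ 2 := tsum_mul_right
  have hCnformbound : ∀ n (h : H), |(inner ℂ (Cn n h) h : ℂ).re| ≤ K * ‖h‖ ^ 2 := by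
    intro n h
    rw [hCnre n h, abs_of_nonneg (tsum_nonneg fun γ => by positivity)]
    calc (∑' γ, (w γ : ℝ) * ‖P n (S γ h)‖ ^ 2)
        ≤ ∑' γ, (w γ : ℝ) * ‖S γ h‖ ^ 2 :=
          Summable.tsum_le_tsum (fun γ => htermP n γ h) (hsum2 n h) (hsum1 h)
      _ = (inner ℂ (C h) h : ℂ).re := (hCre h).symm
      _ ≤ |(inner ℂ (C h) h : ℂ).re| := le_abs_self _
      _ ≤ K * ‖h‖ ^ 2 := hCformbound h
  -- ‖C‖ = K
  have hCK : ‖C‖ ≤ K := sym_norm_le C hCsym hK0 hCformbound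
  have hKC : K ≤ ‖C‖ := by
    have h1 : (inner ℂ (C (z 0)) (z 0) : ℂ).re = K := by
      rw [hCre (z 0), hKdef]
      congr 1
      funext γ
      rw [hS γ 0, add_zero]
    calc K = (inner ℂ (C (z 0)) (z 0) : ℂ).re := h1.symm
      _ ≤ ‖C (z 0)‖ * ‖z 0‖ := re_inner_le_norm' _ _
      _ ≤ ‖C‖ * ‖z 0‖ * ‖z 0‖ :=
          mul_le_mul_of_nonneg_right (C.le_opNorm _) (norm_nonneg _)
      _ = ‖C‖ := by rw [hz0]; ring
  have hnormC : ‖C‖ = K := le_antisymm hCK hKC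
  -- upper bound for Cn
  have hCnle : ∀ n, ‖Cn n‖ ≤ ‖C‖ := by
    intro n
    rw [hnormC]
    exact sym_norm_le (Cn n) (hCnsym n) hK0 (hCnformbound n)
  -- lower bound for Cn
  have hlow : ∀ n, (∑' γ, (w γ : ℝ) * ‖P n (z γ)‖ ^ 2) ≤ ‖Cn n‖ := by
    intro n
    have h1 : (inner ℂ (Cn n (z 0)) (z 0) : ℂ).re = ∑' γ, (w γ : ℝ) * ‖P n (z γ)‖ ^ 2 := by
      rw [hCnre n (z 0)]
      congr 1
      funext γ
      rw [hS γ 0, add_zero]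
    calc (∑' γ, (w γ : ℝ) * ‖P n (z γ)‖ ^ 2) = (inner ℂ (Cn n (z 0)) (z 0) : ℂ).re := h1.symm
      _ ≤ ‖Cn n (z 0)‖ * ‖z 0‖ := re_inner_le_norm' _ _
      _ ≤ ‖Cn n‖ * ‖z 0‖ * ‖z 0‖ :=
          mul_le_mul_of_nonneg_right ((Cn n).le_opNorm _) (norm_nonneg _)
      _ = ‖Cn n‖ := by rw [hz0]; ring
  -- convergence of the lower bound
  have hblim : Tendsto (fun n => ∑' γ, (w γ : ℝ) * ‖P n (z γ)‖ ^ 2) atTop (nhds K) := by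
    refine tendsto_tsum_of_dominated_convergence hw (fun γ => ?_) ?_
    · exact ((hP_tend (z γ)).norm.pow 2).const_mul _
    · filter_upwards with n
      intro γ
      rw [Real.norm_eq_abs, abs_of_nonneg (by positivity)]
      have h2 : ‖P n (z γ)‖ ^ 2 ≤ ‖z γ‖ ^ 2 := by
        nlinarith [hPcon n (z γ), norm_nonneg (P n (z γ)), norm_nonneg (z γ)]
      exact mul_le_mul_of_nonneg_left h2 (w γ).coe_nonneg
  have htendsto : Tendsto (fun n => ‖Cn n‖) atTop (nhds ‖C‖) := by
    rw [hnormC]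
    exact tendsto_of_tendsto_of_tendsto_of_le_of_le hblim tendsto_const_nhds hlow
      (fun n => by rw [← hnormC]; exact hCnle n)
  exact ⟨hCnle, htendsto, hnormC⟩
end

section
/- (The Drury–Arveson space is a committee space.) For every finite set s of a type ι and all functions f, g : ι → ℕ, the multinomial coefficients satisfy Nat.multinomial s f * Nat.multinomial s g ≤ Nat.multinomial s (f + g); equivalently, there are fewer ways to divide people into committees when constraints are placed on the composition of those committees. -/
lemma choose_mul_choose_le (a b c d : ℕ) :
    (a + b).choose a * (c + d).choose c ≤ (a + b + (c + d)).choose (a + c) := by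
  rw [Nat.add_choose_eq (a+b) (c+d) (a+c)]
  exact Finset.single_le_sum (f := fun ij : ℕ × ℕ => (a+b).choose ij.1 * (c+d).choose ij.2)
    (fun _ _ => Nat.zero_le _) (a := (a, c)) (Finset.HasAntidiagonal.mem_antidiagonal.mpr rfl)

/-- the multinomial committee inequality underlying the Drury–Arveson space:
`multinomial s f * multinomial s g ≤ multinomial s (f + g)`. -/
theorem stmt_15 {ι : Type*} (s : Finset ι) (f g : ι → ℕ) :
    Nat.multinomial s f * Nat.multinomial s g ≤ Nat.multinomial s (f + g) := by
  induction s using Finset.cons_induction with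
  | empty => simp
  | cons a s ha ih =>
    rw [Nat.multinomial_cons, Nat.multinomial_cons, Nat.multinomial_cons]
    have h1 : (f + g) a = f a + g a := rfl
    have h2 : ∑ i ∈ s, (f + g) i = (∑ i ∈ s, f i) + ∑ i ∈ s, g i := Finset.sum_add_distrib
    calc (f a + ∑ i ∈ s, f i).choose (f a) * Nat.multinomial s f *
        ((g a + ∑ i ∈ s, g i).choose (g a) * Nat.multinomial s g)
        = (f a + ∑ i ∈ s, f i).choose (f a) * (g a + ∑ i ∈ s, g i).choose (g a) *
          (Nat.multinomial s f * Nat.multinomial s g) := by ring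
      _ ≤ ((f + g) a + ∑ i ∈ s, (f + g) i).choose ((f + g) a) * Nat.multinomial s (f + g) := by
          apply Nat.mul_le_mul _ ih
          rw [h1, h2]
          calc (f a + ∑ i ∈ s, f i).choose (f a) * (g a + ∑ i ∈ s, g i).choose (g a)
              ≤ ((f a + ∑ i ∈ s, f i) + (g a + ∑ i ∈ s, g i)).choose (f a + g a) :=
                choose_mul_choose_le _ _ _ _
            _ = (f a + g a + ((∑ i ∈ s, f i) + ∑ i ∈ s, g i)).choose (f a + g a) := by
                ring_nf
end
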